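/- arXiv:2205.05579 — 6 statements merged into one kernel-verified Lean document; each statement's English description precedes it below -/
import Mathlib

section
/- For every real ξ ≥ 2, the integral ∫₂^ξ (2·log(s−1)/s) ds equals −π²/6 + (log ξ)² + 2·Li₂(1/ξ). (Here the integrand (2/s)·log(s−1) is the two-fold self-convolution of the function h, so this evaluates the inverse Laplace transform of E(η)²/η on [2,∞).) -/
open Real

/-- The dilogarithm Li₂(y) = ∑_{n=1}^∞ yⁿ/n². -/
noncomputable def Li2 (y : ℝ) : ℝ := ∑' n : ℕ, y ^ (n + 1) / ((n : ℝ) + 1) ^ 2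

lemma summable_aux : Summable (fun n : ℕ => 1 / ((n : ℝ) + 1) ^ 2) := by
  have h : Summable (fun n : ℕ => 1 / (n : ℝ) ^ 2) :=
    Real.summable_one_div_nat_pow.mpr one_lt_two
  have := (summable_nat_add_iff 1).mpr h
  simpa using this

lemma li2_continuousOn : ContinuousOn Li2 (Set.Icc (-1 : ℝ) 1) := by
  apply continuousOn_tsum (u := fun n : ℕ => 1 / ((n : ℝ) + 1) ^ 2)
  · intro i
    exact (continuousOn_pow _).div_const _
  · exact summable_aux
  · intro n x hx
    rw [Set.mem_Icc] at hx
    have hx1 : |x| ≤ 1 := abs_le.mpr ⟨hx.1, hx.2⟩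
    rw [norm_div, norm_pow, Real.norm_eq_abs, Real.norm_eq_abs]
    have hpos : (0:ℝ) < ((n : ℝ) + 1) ^ 2 := by positivity
    rw [abs_of_pos hpos]
    have : |x| ^ (n+1) ≤ 1 := by
      calc |x| ^ (n+1) ≤ 1 ^ (n+1) := pow_le_pow_left₀ (abs_nonneg x) hx1 _
        _ = 1 := one_pow _
    exact div_le_div_of_nonneg_right this hpos.le |>.trans_eq rfl
  
lemma li2_zero : Li2 0 = 0 := by
  simp [Li2]

lemma li2_one : Li2 1 = π ^ 2 / 6 := by
  have h := hasSum_zeta_two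
  have h2 := h.tsum_eq
  rw [Summable.tsum_eq_zero_add h.summable] at h2
  simp only [Nat.cast_zero, Nat.cast_add, Nat.cast_one] at h2
  unfold Li2
  rw [← h2]
  norm_num

lemma li2_hasDerivAt {y : ℝ} (h : |y| < 1) :
    HasDerivAt Li2 (∑' n : ℕ, y ^ n / ((n : ℝ) + 1)) y := by
  set r : ℝ := (|y| + 1) / 2 with hr
  have hr0 : 0 ≤ r := by positivity
  have hyr : |y| < r := by rw [hr]; linarith
  have hr1 : r < 1 := by rw [hr]; linarith
  apply hasDerivAt_tsum_of_isPreconnected (u := fun n : ℕ => r ^ n)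
    (g := fun (n : ℕ) (x : ℝ) => x ^ (n + 1) / ((n : ℝ) + 1) ^ 2)
    (g' := fun (n : ℕ) (x : ℝ) => x ^ n / ((n : ℝ) + 1))
    (y₀ := 0) (summable_geometric_of_lt_one hr0 hr1) (isOpen_Ioo (a := -r) (b := r))
    (isPreconnected_Ioo) ?_ ?_ ?_ ?_ ?_
  · intro n x _
    have h1 : HasDerivAt (fun x : ℝ => x ^ (n + 1)) ((n + 1 : ℕ) * x ^ n) x :=
      hasDerivAt_pow (n + 1) x
    have h2 := h1.div_const (((n : ℝ) + 1) ^ 2)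
    refine h2.congr_deriv ?_
    push_cast
    field_simp
  · intro n x hx
    rw [Set.mem_Ioo] at hx
    have hxr : |x| ≤ r := abs_le.mpr ⟨hx.1.le, hx.2.le⟩
    rw [norm_div, norm_pow, Real.norm_eq_abs, Real.norm_eq_abs]
    have h1 : ((n:ℝ) + 1) ≤ |(n:ℝ) + 1| := le_abs_self _
    have h2 : (1:ℝ) ≤ |(n:ℝ) + 1| := by
      rw [abs_of_pos (by positivity)]; linarith [Nat.cast_nonneg (α := ℝ) n]
    calc |x| ^ n / |(n:ℝ) + 1| ≤ |x| ^ n / 1 :=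
          div_le_div_of_nonneg_left (by positivity) one_pos h2
      _ = |x| ^ n := div_one _
      _ ≤ r ^ n := pow_le_pow_left₀ (abs_nonneg x) hxr n
  · exact Set.mem_Ioo.mpr ⟨by linarith [abs_nonneg y], by linarith [abs_nonneg y]⟩
  · simpa using summable_zero
  · exact Set.mem_Ioo.mpr ⟨neg_lt_of_abs_lt hyr, lt_of_abs_lt hyr⟩

lemma li2_hasDerivAt' {y : ℝ} (h0 : y ≠ 0) (h : |y| < 1) :
    HasDerivAt Li2 (-Real.log (1 - y) / y) y := by
  have hd := li2_hasDerivAt h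
  have hs := Real.hasSum_pow_div_log_of_abs_lt_one h
  have hs2 : HasSum (fun n : ℕ => y ^ n / ((n : ℝ) + 1)) (-Real.log (1 - y) / y) := by
    have := hs.div_const y
    have e : (fun n : ℕ => y ^ n / ((n : ℝ) + 1)) = fun n : ℕ => y ^ (n + 1) / ((n : ℝ) + 1) / y := by
      funext n
      rw [pow_succ]
      field_simp
    rw [e]
    exact this
  rwa [hs2.tsum_eq] at hd

lemma reflection_deriv {x : ℝ} (hx : x ∈ Set.Ioo (0:ℝ) 1) :
    HasDerivAt (fun x => Li2 x + Li2 (1 - x) + Real.log x * Real.log (1 - x)) 0 x := by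
  obtain ⟨hx0, hx1⟩ := hx
  have h1x0 : (0:ℝ) < 1 - x := by linarith
  have hax : |x| < 1 := by rw [abs_of_pos hx0]; linarith
  have ha1x : |1 - x| < 1 := by rw [abs_of_pos h1x0]; linarith
  have d1 : HasDerivAt Li2 (-Real.log (1 - x) / x) x := li2_hasDerivAt' (ne_of_gt hx0) hax
  have d2i : HasDerivAt (fun y : ℝ => 1 - y) (-1) x := by
    simpa using (hasDerivAt_id x).const_sub 1
  have d2o : HasDerivAt Li2 (-Real.log (1 - (1 - x)) / (1 - x)) (1 - x) :=
    li2_hasDerivAt' (ne_of_gt h1x0) ha1x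
  have d2 := d2o.comp x d2i
  have dl1 : HasDerivAt Real.log x⁻¹ x := Real.hasDerivAt_log (ne_of_gt hx0)
  have dl2 : HasDerivAt (fun y : ℝ => Real.log (1 - y)) ((1 - x)⁻¹ * (-1)) x :=
    (Real.hasDerivAt_log (ne_of_gt h1x0)).comp x d2i
  have d3 := dl1.mul dl2
  have hsum := (d1.add d2).add d3
  refine hsum.congr_deriv ?_
  have hx' : x ≠ 0 := ne_of_gt hx0
  have h1x' : (1:ℝ) - x ≠ 0 := ne_of_gt h1x0
  simp only [Function.comp, sub_sub_cancel]
  field_simp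
  ring

lemma reflection_const {x : ℝ} (hx : x ∈ Set.Ioo (0:ℝ) 1) :
    Li2 x + Li2 (1 - x) + Real.log x * Real.log (1 - x) = π ^ 2 / 6 := by
  set G : ℝ → ℝ := fun x => Li2 x + Li2 (1 - x) + Real.log x * Real.log (1 - x) with hG
  have hconst : ∀ y ∈ Set.Ioo (0:ℝ) 1, ∀ z ∈ Set.Ioo (0:ℝ) 1, y ≤ z → G z = G y := by
    intro y hy z hz hyz
    have hsub : Set.Icc y z ⊆ Set.Ioo (0:ℝ) 1 := fun t ht =>
      ⟨lt_of_lt_of_le hy.1 ht.1, lt_of_le_of_lt ht.2 hz.2⟩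
    exact constant_of_has_deriv_right_zero
      (fun t ht => (reflection_deriv (hsub ht)).continuousAt.continuousWithinAt)
      (fun t ht => (reflection_deriv (hsub (Set.mem_Icc_of_Ico ht))).hasDerivWithinAt)
      z ⟨hyz, le_refl z⟩
  have hGx : ∀ y ∈ Set.Ioo (0:ℝ) 1, G y = G x := by
    intro y hy
    rcases le_total x y with h | h
    · exact hconst x hx y hy h
    · exact (hconst y hy x hx h).symm
  have hne : (nhdsWithin (0:ℝ) (Set.Ioo (0:ℝ) 1)).NeBot := by
    apply mem_closure_iff_nhdsWithin_neBot.mp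
    rw [closure_Ioo (by norm_num : (0:ℝ) ≠ 1)]
    exact ⟨le_refl 0, by norm_num⟩
  have l1 : Filter.Tendsto Li2 (nhdsWithin (0:ℝ) (Set.Ioo (0:ℝ) 1)) (nhds 0) := by
    have hcw := (li2_continuousOn 0 (by norm_num)).tendsto
    rw [li2_zero] at hcw
    exact hcw.mono_left (nhdsWithin_mono _ (fun t ht => ⟨by linarith [ht.1], ht.2.le⟩))
  have l2 : Filter.Tendsto (fun y => Li2 (1 - y)) (nhdsWithin (0:ℝ) (Set.Ioo (0:ℝ) 1))
      (nhds (π ^ 2 / 6)) := by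
    have hcw := (li2_continuousOn 1 (by norm_num)).tendsto
    rw [li2_one] at hcw
    apply hcw.comp
    apply tendsto_nhdsWithin_of_tendsto_nhds_of_eventually_within
    · have h' : Filter.Tendsto (fun y : ℝ => 1 - y) (nhds (0:ℝ)) (nhds 1) := by
        have hc : Continuous (fun y : ℝ => 1 - y) := by continuity
        simpa using hc.tendsto (0:ℝ)
      exact h'.mono_left nhdsWithin_le_nhds
    · filter_upwards [self_mem_nhdsWithin] with y hy
      exact ⟨by linarith [hy.2], by linarith [hy.1]⟩
  have l3 : Filter.Tendsto (fun y => Real.log y * Real.log (1 - y))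
      (nhdsWithin (0:ℝ) (Set.Ioo (0:ℝ) 1)) (nhds 0) := by
    apply squeeze_zero_norm' (a := fun y => 2 * ‖y * Real.log y‖)
    · have hhalf : ∀ᶠ y in nhdsWithin (0:ℝ) (Set.Ioo (0:ℝ) 1), y < (1:ℝ)/2 :=
        (eventually_lt_nhds (show (0:ℝ) < 1/2 by norm_num)).filter_mono nhdsWithin_le_nhds
      filter_upwards [self_mem_nhdsWithin, hhalf] with y hy hy2
      obtain ⟨hy0, hy1⟩ := hy
      have h1y : (0:ℝ) < 1 - y := by linarith
      have hld : Real.log y ≤ 0 := Real.log_nonpos hy0.le (by linarith)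
      have hl1 : Real.log (1 - y) ≤ 0 := Real.log_nonpos h1y.le (by linarith)
      have hbound : -Real.log (1 - y) ≤ 2 * y := by
        have h1 : Real.log ((1 - y)⁻¹) ≤ (1 - y)⁻¹ - 1 :=
          Real.log_le_sub_one_of_pos (by positivity)
        rw [Real.log_inv] at h1
        have h2 : (1 - y)⁻¹ - 1 ≤ 2 * y := by
          have e : (1 - y)⁻¹ - 1 = y / (1 - y) := by field_simp; ring
          rw [e, div_le_iff₀ h1y]
          nlinarith
        linarith
      rw [Real.norm_eq_abs, Real.norm_eq_abs, abs_mul, abs_mul]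
      rw [abs_of_nonpos hld, abs_of_nonpos hl1, abs_of_pos hy0]
      calc -Real.log y * -Real.log (1 - y) ≤ -Real.log y * (2 * y) := by
            apply mul_le_mul_of_nonneg_left hbound (by linarith)
        _ = 2 * (y * -Real.log y) := by ring
    · have h0 : Filter.Tendsto (fun y : ℝ => 2 * ‖y * Real.log y‖) (nhds 0)
          (nhds (2 * ‖(0:ℝ) * Real.log 0‖)) :=
        (continuous_const.mul Real.continuous_mul_log.norm).tendsto 0
      simp only [zero_mul, norm_zero, mul_zero] at h0
      exact h0.mono_left nhdsWithin_le_nhds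
  have hlim : Filter.Tendsto G (nhdsWithin (0:ℝ) (Set.Ioo (0:ℝ) 1)) (nhds (π ^ 2 / 6)) := by
    have := (l1.add l2).add l3
    simpa using this
  have hlim2 : Filter.Tendsto G (nhdsWithin (0:ℝ) (Set.Ioo (0:ℝ) 1)) (nhds (G x)) := by
    apply Filter.Tendsto.congr' ?_ (tendsto_const_nhds (α := ℝ))
    filter_upwards [self_mem_nhdsWithin] with y hy
    exact (hGx y hy).symm
  exact (tendsto_nhds_unique hlim2 hlim)

lemma li2_half : (Real.log 2) ^ 2 + 2 * Li2 (1/2) = π ^ 2 / 6 := by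
  have h := reflection_const (x := (1:ℝ)/2) ⟨by norm_num, by norm_num⟩
  have h2 : (1:ℝ) - 1/2 = 1/2 := by norm_num
  rw [h2] at h
  rw [show ((1:ℝ)/2) = 2⁻¹ by norm_num, Real.log_inv] at h
  rw [show ((1:ℝ)/2) = 2⁻¹ by norm_num]
  nlinarith [h]

/-- For every real ξ ≥ 2,
∫₂^ξ (2·log(s−1)/s) ds = −π²/6 + (log ξ)² + 2·Li₂(1/ξ). -/
theorem integral_two_fold_convolution (ξ : ℝ) (hξ : 2 ≤ ξ) :
    ∫ s in (2 : ℝ)..ξ, 2 * Real.log (s - 1) / s =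
      -(π ^ 2) / 6 + (Real.log ξ) ^ 2 + 2 * Li2 (1 / ξ) := by
  have key : ∀ s ∈ Set.uIcc (2:ℝ) ξ,
      HasDerivAt (fun s => (Real.log s) ^ 2 + 2 * Li2 (1 / s)) (2 * Real.log (s - 1) / s) s := by
    intro s hs
    rw [Set.uIcc_of_le hξ] at hs
    have hs2 : 2 ≤ s := hs.1
    have hs0 : (0:ℝ) < s := by linarith
    have hs1 : (0:ℝ) < s - 1 := by linarith
    have hinv0 : (0:ℝ) < 1 / s := by positivity
    have hinv1 : 1 / s < 1 := by rw [div_lt_one hs0]; linarith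
    have d1 : HasDerivAt (fun s : ℝ => (Real.log s) ^ 2) (2 * Real.log s * s⁻¹) s := by
      have := (Real.hasDerivAt_log (ne_of_gt hs0)).pow 2
      norm_num at this
      exact this
    have dinner : HasDerivAt (fun s : ℝ => 1 / s) (-(s ^ 2)⁻¹) s := by
      simpa [one_div] using hasDerivAt_inv (ne_of_gt hs0)
    have douter : HasDerivAt Li2 (-Real.log (1 - 1/s) / (1/s)) (1/s) :=
      li2_hasDerivAt' (ne_of_gt hinv0) (by rw [abs_of_pos hinv0]; exact hinv1)
    have d2 := (douter.comp s dinner).const_mul 2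
    have hsum := d1.add d2
    refine hsum.congr_deriv ?_
    have hlog : Real.log (1 - 1/s) = Real.log (s-1) - Real.log s := by
      rw [show 1 - 1/s = (s-1)/s by field_simp]
      exact Real.log_div (ne_of_gt hs1) (ne_of_gt hs0)
    simp only [Function.comp, hlog]
    have hs0' : s ≠ 0 := ne_of_gt hs0
    field_simp
    ring
  have hcont : ContinuousOn (fun s => 2 * Real.log (s - 1) / s) (Set.uIcc (2:ℝ) ξ) := by
    rw [Set.uIcc_of_le hξ]
    apply ContinuousOn.div
    · exact continuousOn_const.mul ((continuousOn_id.sub continuousOn_const).log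
        (fun x hx => by simp only [Pi.sub_apply, id_eq]; intro h; have := hx.1; linarith [hx.1]))
    · exact continuousOn_id
    · intro x hx
      have := hx.1
      intro h
      rw [h] at this
      linarith
  have heval := intervalIntegral.integral_eq_sub_of_hasDerivAt key (hcont.intervalIntegrable)
  rw [heval]
  have h2 := li2_half
  have : Real.log ((2:ℝ)) ^ 2 + 2 * Li2 (1/2) = π ^ 2 / 6 := h2
  norm_num
  linarith
end

section
/- Let σ be Watterson's function. For all real x with 1 < x ≤ 2, √x·σ(x) = 1 − (1/2)·log((1 + √(1 − 1/x))/(1 − √(1 − 1/x))). -/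
open Real

lemma watterson_G_hasDerivAt (t : ℝ) (ht : 1 < t) :
    HasDerivAt (fun s : ℝ => 1 - (1 / 2) * Real.log ((1 + Real.sqrt (1 - 1 / s)) / (1 - Real.sqrt (1 - 1 / s))))
      (-1 / (2 * Real.sqrt t * Real.sqrt (t - 1))) t := by
  have ht0 : (0:ℝ) < t := by linarith
  have hin : (0:ℝ) < 1 - 1 / t := by
    have : 1 / t < 1 := by rw [div_lt_one ht0]; exact ht
    linarith
  set u := Real.sqrt (1 - 1 / t) with hu_def
  have hu0 : 0 < u := Real.sqrt_pos.2 hin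
  have hu1 : u < 1 := by
    rw [hu_def]
    refine (Real.sqrt_lt' one_pos).2 ?_
    have : 0 < 1 / t := by positivity
    nlinarith
  have huu : u * u = 1 - 1 / t := Real.mul_self_sqrt hin.le
  have d1 : HasDerivAt (fun s : ℝ => 1 - 1 / s) (1 / t ^ 2) t := by
    simpa using (hasDerivAt_inv (ne_of_gt ht0)).const_sub 1
  have dsq : HasDerivAt (fun s : ℝ => Real.sqrt (1 - 1 / s)) (1 / t ^ 2 / (2 * u)) t :=
    d1.sqrt (ne_of_gt hin)
  have d2 : HasDerivAt (fun s : ℝ => Real.log (1 + Real.sqrt (1 - 1 / s)))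
      ((1 / t ^ 2 / (2 * u)) / (1 + u)) t :=
    (dsq.const_add 1).log (by positivity)
  have d3 : HasDerivAt (fun s : ℝ => Real.log (1 - Real.sqrt (1 - 1 / s)))
      ((-(1 / t ^ 2 / (2 * u))) / (1 - u)) t :=
    (dsq.const_sub 1).log (sub_ne_zero.2 hu1.ne')
  have H : HasDerivAt (fun s : ℝ => 1 - (1 / 2) *
        (Real.log (1 + Real.sqrt (1 - 1 / s)) - Real.log (1 - Real.sqrt (1 - 1 / s))))
      (-1 / (2 * Real.sqrt t * Real.sqrt (t - 1))) t := by
    have := (((d2.sub d3).const_mul (1 / 2 : ℝ)).const_sub 1)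
    refine this.congr_deriv ?_
    symm
    have key : Real.sqrt t * Real.sqrt (t - 1) = t * u := by
      have h1 : t * u = Real.sqrt (t * (t - 1)) := by
        rw [show t * (t - 1) = t ^ 2 * (1 - 1 / t) by field_simp,
          Real.sqrt_mul (by positivity), Real.sqrt_sq ht0.le]
      rw [h1, Real.sqrt_mul ht0.le]
    rw [show (2 * Real.sqrt t * Real.sqrt (t - 1)) = 2 * (t * u) by rw [mul_assoc, key]]
    have htne : t ≠ 0 := ne_of_gt ht0
    have hune : u ≠ 0 := ne_of_gt hu0
    have h1u : (1:ℝ) + u ≠ 0 := by linarith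
    have h2u : (1:ℝ) - u ≠ 0 := sub_ne_zero.2 hu1.ne'
    have htu : t * (u * u) = t - 1 := by rw [huu]; field_simp
    field_simp
    linear_combination 2 * htu
  refine H.congr_of_eventuallyEq ?_
  filter_upwards [Ioi_mem_nhds ht] with s hs
  have hs0 : (0:ℝ) < s := lt_trans one_pos hs
  have hins : (0:ℝ) < 1 - 1 / s := by
    have : 1 / s < 1 := by rw [div_lt_one hs0]; exact hs
    linarith
  have h1 : (0:ℝ) < 1 + Real.sqrt (1 - 1 / s) := by positivity
  have h2 : (0:ℝ) < 1 - Real.sqrt (1 - 1 / s) := by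
    have : Real.sqrt (1 - 1 / s) < 1 := by
      refine (Real.sqrt_lt' one_pos).2 ?_
      have : 0 < 1 / s := by positivity
      nlinarith
    linarith
  rw [Real.log_div (ne_of_gt h1) (ne_of_gt h2)]

/-- Watterson's function satisfies
√x·σ(x) = 1 − (1/2)·log((1 + √(1 − 1/x))/(1 − √(1 − 1/x))) for 1 < x ≤ 2. -/
theorem watterson_on_one_two
    (σ : ℝ → ℝ)
    (hσ_nonpos : ∀ x ≤ (0 : ℝ), σ x = 0)
    (hσ_init : ∀ x : ℝ, 0 < x → x ≤ 1 → σ x = 1 / Real.sqrt x)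
    (hσ_cont : ContinuousOn σ (Set.Ioi 0))
    (hσ_dde : ∀ x : ℝ, 1 < x → HasDerivAt σ (-(σ x / 2 + σ (x - 1) / 2) / x) x) :
    ∀ x : ℝ, 1 < x → x ≤ 2 →
      Real.sqrt x * σ x =
        1 - (1 / 2) * Real.log ((1 + Real.sqrt (1 - 1 / x)) / (1 - Real.sqrt (1 - 1 / x))) := by
  intro x hx1 hx2
  set F : ℝ → ℝ := fun t => Real.sqrt t * σ t with hF_def
  set G : ℝ → ℝ := fun t =>
    1 - (1 / 2) * Real.log ((1 + Real.sqrt (1 - 1 / t)) / (1 - Real.sqrt (1 - 1 / t))) with hG_def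
  set D : ℝ → ℝ := fun t => -1 / (2 * Real.sqrt t * Real.sqrt (t - 1)) with hD_def
  have hFderiv : ∀ t : ℝ, 1 < t → t ≤ 2 → HasDerivAt F (D t) t := by
    intro t ht1 ht2
    have ht0 : (0:ℝ) < t := by linarith
    have hσt1 : σ (t - 1) = 1 / Real.sqrt (t - 1) := hσ_init _ (by linarith) (by linarith)
    have h := (Real.hasDerivAt_sqrt (ne_of_gt ht0)).mul (hσ_dde t ht1)
    refine h.congr_deriv ?_
    symm
    rw [hσt1]
    simp only [hD_def]
    have hst : Real.sqrt t * Real.sqrt t = t := Real.mul_self_sqrt ht0.le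
    have hst1 : Real.sqrt (t - 1) * Real.sqrt (t - 1) = t - 1 :=
      Real.mul_self_sqrt (by linarith)
    have hstpos : (0:ℝ) < Real.sqrt t := Real.sqrt_pos.2 ht0
    have hst1pos : (0:ℝ) < Real.sqrt (t - 1) := Real.sqrt_pos.2 (by linarith)
    have htne : t ≠ 0 := ne_of_gt ht0
    field_simp
    linear_combination (1 + Real.sqrt (t - 1) * σ t) * hst
  have const : ∀ a ∈ Set.Ioc 1 x, F x - G x = F a - G a := by
    intro a ha
    have key := eq_of_has_deriv_right_eq (f := F) (g := fun t => G t + (F a - G a))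
      (f' := D) (a := a) (b := x)
      (fun t ht => (hFderiv t (lt_of_lt_of_le ha.1 ht.1) (le_trans ht.2.le hx2)).hasDerivWithinAt)
      (fun t ht => (((watterson_G_hasDerivAt t (lt_of_lt_of_le ha.1 ht.1)).add_const
        (F a - G a))).hasDerivWithinAt)
      ((Real.continuous_sqrt.continuousOn.mul
        (hσ_cont.mono (fun t ht => lt_of_lt_of_le (lt_trans one_pos ha.1) ht.1))))
      (fun t ht => (((watterson_G_hasDerivAt t (lt_of_lt_of_le ha.1 ht.1)).add_const
        (F a - G a))).continuousAt.continuousWithinAt)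
      (by ring) x ⟨ha.2, le_refl x⟩
    have key' : F x = G x + (F a - G a) := key
    linarith
  -- limit as a → 1⁺
  have hσ1 : σ 1 = 1 := by simpa using hσ_init 1 one_pos le_rfl
  have hF1 : F 1 = 1 := by simp [hF_def, hσ1]
  have hG1 : G 1 = 1 := by norm_num [hG_def]
  have hFtend : Filter.Tendsto F (nhdsWithin 1 (Set.Ioi 1)) (nhds 1) := by
    have hcw : ContinuousWithinAt F (Set.Ioi 0) 1 :=
      (Real.continuous_sqrt.continuousAt.continuousWithinAt.mul (hσ_cont 1 (by norm_num)))
    have := hcw.mono (Set.Ioi_subset_Ioi (by norm_num : (0:ℝ) ≤ 1))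
    rw [ContinuousWithinAt, hF1] at this
    exact this
  have hGtend : Filter.Tendsto G (nhdsWithin 1 (Set.Ioi 1)) (nhds 1) := by
    have hc : ContinuousAt G 1 := by
      have hinner : ContinuousAt (fun s : ℝ =>
          (1 + Real.sqrt (1 - 1 / s)) / (1 - Real.sqrt (1 - 1 / s))) 1 := by
        apply ContinuousAt.div
        · exact (Real.continuous_sqrt.continuousAt.comp
            ((continuousAt_const.div continuousAt_id one_ne_zero).const_sub 1)).const_add 1
        · exact ((Real.continuous_sqrt.continuousAt.comp
            ((continuousAt_const.div continuousAt_id one_ne_zero).const_sub 1)).const_sub 1)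
        · norm_num
      exact ((hinner.log (by norm_num)).const_mul (1/2 : ℝ)).const_sub 1
    have := hc.continuousWithinAt (s := Set.Ioi 1)
    rw [ContinuousWithinAt, hG1] at this
    exact this
  have htend0 : Filter.Tendsto (fun a => F a - G a) (nhdsWithin 1 (Set.Ioi 1)) (nhds 0) := by
    simpa using hFtend.sub hGtend
  have htendc : Filter.Tendsto (fun a => F a - G a) (nhdsWithin 1 (Set.Ioi 1))
      (nhds (F x - G x)) := by
    apply Filter.Tendsto.congr' _ tendsto_const_nhds
    filter_upwards [Ioc_mem_nhdsGT_of_mem ⟨le_refl (1:ℝ), hx1⟩] with a ha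
    exact const a ha
  have : F x - G x = 0 := tendsto_nhds_unique htendc htend0
  have hfin : F x = G x := by linarith
  simpa [hF_def, hG_def] using hfin
end

section
/- Let σ be Watterson's function. For all real x with 0 < x < 1 (so that 1/x > 1), the derivative with respect to x of the function x ↦ x^{−1/2}·σ(1/x) equals (1/(2·x^{3/2}))·σ((1−x)/x). -/
open Real

/-- For Watterson's function σ and 0 < x < 1, the derivative of
x ↦ x^{−1/2}·σ(1/x) equals (1/(2·x^{3/2}))·σ((1−x)/x). -/
theorem watterson_tilde_derivative
    (σ : ℝ → ℝ)
    (hσ_nonpos : ∀ x ≤ (0 : ℝ), σ x = 0)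
    (hσ_init : ∀ x : ℝ, 0 < x → x ≤ 1 → σ x = 1 / Real.sqrt x)
    (hσ_cont : ContinuousOn σ (Set.Ioi 0))
    (hσ_dde : ∀ y : ℝ, 1 < y → HasDerivAt σ (-(σ y / 2 + σ (y - 1) / 2) / y) y)
    (x : ℝ) (hx0 : 0 < x) (hx1 : x < 1) :
    HasDerivAt (fun t : ℝ => t ^ (-(1 : ℝ) / 2) * σ (1 / t))
      (1 / (2 * x ^ ((3 : ℝ) / 2)) * σ ((1 - x) / x)) x := by
  have hxne : x ≠ 0 := ne_of_gt hx0
  have hy : (1 : ℝ) < 1 / x := by rw [lt_div_iff₀ hx0]; linarith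
  have h1 : HasDerivAt (fun t : ℝ => t ^ (-(1 : ℝ) / 2))
      ((-(1 : ℝ) / 2) * x ^ ((-(1 : ℝ) / 2) - 1)) x :=
    Real.hasDerivAt_rpow_const (Or.inl hxne)
  have hinv : HasDerivAt (fun t : ℝ => 1 / t) (-(x ^ 2)⁻¹) x := by
    simpa [one_div] using hasDerivAt_inv hxne
  have h2 : HasDerivAt (fun t : ℝ => σ (1 / t))
      ((-(σ (1 / x) / 2 + σ (1 / x - 1) / 2) / (1 / x)) * (-(x ^ 2)⁻¹)) x :=
    (hσ_dde (1 / x) hy).comp x hinv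
  have h := h1.mul h2
  have hs : (1 - x) / x = 1 / x - 1 := by field_simp
  refine h.congr_deriv ?_
  rw [hs]
  have hr1 : x ^ ((-(1 : ℝ) / 2) - 1) = (x ^ ((3 : ℝ) / 2))⁻¹ := by
    rw [← Real.rpow_neg hx0.le]; norm_num
  have hr2 : x ^ (-(1 : ℝ) / 2) = (x ^ ((1 : ℝ) / 2))⁻¹ := by
    rw [← Real.rpow_neg hx0.le]; norm_num
  have hr3 : x ^ ((3 : ℝ) / 2) = x ^ ((1 : ℝ) / 2) * x := by
    rw [show (3:ℝ)/2 = 1/2 + 1 by norm_num, Real.rpow_add hx0, Real.rpow_one]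
  have hpos : (0 : ℝ) < x ^ ((1 : ℝ) / 2) := Real.rpow_pos_of_pos hx0 _
  rw [hr1, hr2, hr3]
  field_simp
  ring
end

section
/- Let ρ be Dickman's function, and assume 0 ≤ ρ(ξ) ≤ 1 for all ξ ≥ 0. Then for every real η > 0, the one-sided Laplace transform ∫₀^∞ e^{−ηξ}·ρ(ξ) dξ equals exp(−E(η))/η, where E(η) = ∫_η^∞ e^{−t}/t dt is the exponential integral. -/
open Real MeasureTheory

/-- The exponential integral E(x) = ∫ₓ^∞ e^{−t}/t dt. -/
noncomputable def expInt (x : ℝ) : ℝ := ∫ t in Set.Ioi x, Real.exp (-t) / t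

open Set Filter

lemma exp_deriv_aux (η x : ℝ) : HasDerivAt (fun ξ : ℝ => Real.exp (-η * ξ)) (-η * Real.exp (-η * x)) x := by
  have h : HasDerivAt (fun ξ : ℝ => -η * ξ) (-η) x := by
    simpa using (hasDerivAt_id x).const_mul (-η)
  simpa [mul_comm] using h.exp

lemma tendsto_exp_scaled {η : ℝ} (hη : 0 < η) :
    Tendsto (fun ξ : ℝ => Real.exp (-η * ξ)) atTop (nhds 0) := by
  have : Tendsto (fun ξ : ℝ => η * ξ) atTop atTop :=
    Tendsto.const_mul_atTop hη tendsto_id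
  have h2 := tendsto_exp_neg_atTop_nhds_zero.comp this
  simpa [Function.comp_def, neg_mul] using h2

lemma integral_exp_scaled (a : ℝ) {η : ℝ} (hη : 0 < η) :
    ∫ ξ in Set.Ioi a, Real.exp (-η * ξ) = Real.exp (-η * a) / η := by
  have hderiv : ∀ x ∈ Set.Ici a, HasDerivAt (fun ξ : ℝ => -Real.exp (-η * ξ) / η)
      (Real.exp (-η * x)) x := by
    intro x _
    have := ((exp_deriv_aux η x).div_const η).fun_neg
    convert this using 1
    · rfl
    · rfl
    · ext y; ring
    · field_simp
  have hint : IntegrableOn (fun ξ : ℝ => Real.exp (-η * ξ)) (Set.Ioi a) :=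
    exp_neg_integrableOn_Ioi a hη
  have htend : Tendsto (fun ξ : ℝ => -Real.exp (-η * ξ) / η) atTop (nhds 0) := by
    have := ((tendsto_exp_scaled hη).neg).div_const η
    simpa using this
  have := integral_Ioi_of_hasDerivAt_of_tendsto' hderiv hint htend
  rw [this]; ring

lemma expInt_integrableOn {a : ℝ} (ha : 0 < a) :
    IntegrableOn (fun t : ℝ => Real.exp (-t) / t) (Set.Ioi a) := by
  have hint : IntegrableOn (fun t : ℝ => Real.exp (-t) / a) (Set.Ioi a) :=
    (integrableOn_exp_neg_Ioi a).div_const a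
  refine Integrable.mono' hint ?_ ?_
  · refine ContinuousOn.aestronglyMeasurable ?_ measurableSet_Ioi
    refine ContinuousOn.div (Continuous.continuousOn (by continuity)) continuousOn_id ?_
    intro t ht; exact ne_of_gt (lt_trans ha ht)
  · refine (ae_restrict_iff' measurableSet_Ioi).2 (ae_of_all _ ?_)
    intro t ht
    have ht0 : 0 < t := lt_trans ha ht
    rw [Real.norm_eq_abs, abs_div, abs_of_pos (Real.exp_pos _), abs_of_pos ht0]
    rw [div_le_div_iff₀ ht0 ha]
    have : Real.exp (-t) * a ≤ Real.exp (-t) * t :=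
      mul_le_mul_of_nonneg_left (le_of_lt ht) (Real.exp_pos _).le
    linarith

lemma contOn_g : ContinuousOn (fun t : ℝ => Real.exp (-t) / t) (Set.Ioi (0:ℝ)) := by
  refine ContinuousOn.div (Continuous.continuousOn (by continuity)) continuousOn_id ?_
  intro t ht; exact ne_of_gt ht

lemma expInt_hasDerivAt {x : ℝ} (hx : 0 < x) :
    HasDerivAt expInt (-(Real.exp (-x) / x)) x := by
  set a := x / 2 with ha_def
  have ha : 0 < a := by positivity
  have hax : a < x := by rw [ha_def]; linarith
  set g : ℝ → ℝ := fun t => Real.exp (-t) / t with hg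
  have key : ∀ y, a < y → expInt y = expInt a - ∫ t in a..y, g t := by
    intro y hy
    have hsplit : Set.Ioc a y ∪ Set.Ioi y = Set.Ioi a := Set.Ioc_union_Ioi_eq_Ioi hy.le
    have h1 : IntegrableOn g (Set.Ioi y) := expInt_integrableOn (lt_trans ha hy)
    have h2 : IntegrableOn g (Set.Ioc a y) :=
      (expInt_integrableOn ha).mono_set Set.Ioc_subset_Ioi_self
    have := setIntegral_union (Set.Ioc_disjoint_Ioi le_rfl) measurableSet_Ioi h2 h1
    rw [hsplit] at this
    rw [intervalIntegral.integral_of_le hy.le]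
    show (∫ t in Set.Ioi y, g t) = (∫ t in Set.Ioi a, g t) - ∫ t in Set.Ioc a y, g t
    rw [this]; ring
  have hcg : ContinuousAt g x := contOn_g.continuousAt (Ioi_mem_nhds hx)
  have hFTC : HasDerivAt (fun y => ∫ t in a..y, g t) (g x) x := by
    refine intervalIntegral.integral_hasDerivAt_right ?_ ?_ hcg
    · rw [intervalIntegrable_iff_integrableOn_Ioc_of_le hax.le]
      exact (expInt_integrableOn ha).mono_set Set.Ioc_subset_Ioi_self
    · exact contOn_g.stronglyMeasurableAtFilter isOpen_Ioi x hx
  have h2 : HasDerivAt (fun y => expInt a - ∫ t in a..y, g t) (-(g x)) x := by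
    simpa using (hFTC.const_sub (expInt a))
  refine h2.congr_of_eventuallyEq ?_
  filter_upwards [Ioi_mem_nhds hax] with y hy
  exact key y hy

lemma expInt_tendsto_zero : Tendsto expInt atTop (nhds 0) := by
  have hup : ∀ᶠ η : ℝ in atTop, expInt η ≤ Real.exp (-η) := by
    filter_upwards [eventually_ge_atTop (1:ℝ)] with η hη
    have hη0 : 0 < η := lt_of_lt_of_le one_pos hη
    calc expInt η ≤ ∫ t in Set.Ioi η, Real.exp (-t) := by
          refine setIntegral_mono_on (expInt_integrableOn hη0)
            (integrableOn_exp_neg_Ioi η) measurableSet_Ioi ?_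
          intro t ht
          have ht1 : 1 ≤ t := le_trans hη (le_of_lt ht)
          exact div_le_self (Real.exp_pos _).le ht1
      _ = Real.exp (-η) := integral_exp_neg_Ioi η
  have hlo : ∀ᶠ η : ℝ in atTop, -Real.exp (-η) ≤ expInt η := by
    filter_upwards [eventually_gt_atTop (0:ℝ)] with η hη
    have h0 : (0:ℝ) ≤ expInt η := by
      refine setIntegral_nonneg measurableSet_Ioi ?_
      intro t ht
      exact div_nonneg (Real.exp_pos _).le (le_of_lt (lt_trans hη ht))
    linarith [Real.exp_pos (-η)]
  have hneg : Tendsto (fun η : ℝ => -Real.exp (-η)) atTop (nhds 0) := by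
    simpa using tendsto_exp_neg_atTop_nhds_zero.neg
  exact tendsto_of_tendsto_of_tendsto_of_le_of_le'
    hneg tendsto_exp_neg_atTop_nhds_zero hlo hup

lemma integrable_exp_mul {a η : ℝ} (hη : 0 < η) {F : ℝ → ℝ}
    (hF : AEStronglyMeasurable F (volume.restrict (Set.Ioi a)))
    (hb : ∀ ξ ∈ Set.Ioi a, |F ξ| ≤ 1) :
    IntegrableOn (fun ξ : ℝ => Real.exp (-η * ξ) * F ξ) (Set.Ioi a) := by
  refine Integrable.mono' (exp_neg_integrableOn_Ioi a hη) ?_ ?_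
  · exact ((Real.continuous_exp.comp (continuous_const.mul continuous_id)).aestronglyMeasurable).mul hF
  · refine (ae_restrict_iff' measurableSet_Ioi).2 (ae_of_all _ fun ξ hξ => ?_)
    rw [norm_mul, Real.norm_eq_abs, Real.norm_eq_abs, Real.abs_exp]
    calc Real.exp (-η * ξ) * |F ξ| ≤ Real.exp (-η * ξ) * 1 :=
          mul_le_mul_of_nonneg_left (hb ξ hξ) (Real.exp_pos _).le
      _ = Real.exp (-η * ξ) := mul_one _

lemma shift_setIntegral (F : ℝ → ℝ) :
    ∫ ξ in Set.Ioi (1:ℝ), F ξ = ∫ ξ in Set.Ioi (0:ℝ), F (ξ + 1) := by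
  have h₁ : MeasurePreserving (fun x : ℝ => x + 1) volume volume :=
    measurePreserving_add_right volume 1
  have h₂ : MeasurableEmbedding (fun x : ℝ => x + 1) :=
    (MeasurableEquiv.addRight (1:ℝ)).measurableEmbedding
  have hpre : (fun x : ℝ => x + 1) ⁻¹' Set.Ioi 1 = Set.Ioi 0 := by
    ext u; simp
  have := h₁.setIntegral_preimage_emb h₂ F (Set.Ioi 1)
  rw [hpre] at this
  exact this.symm

section rho
variable {ρ : ℝ → ℝ}

lemma rho_abs_le (hρ_neg : ∀ x < (0 : ℝ), ρ x = 0)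
    (hρ_bdd : ∀ ξ : ℝ, 0 ≤ ξ → 0 ≤ ρ ξ ∧ ρ ξ ≤ 1) : ∀ x : ℝ, |ρ x| ≤ 1 := by
  intro x
  rcases lt_or_ge x 0 with h | h
  · simp [hρ_neg x h]
  · obtain ⟨h0, h1⟩ := hρ_bdd x h
    rw [abs_of_nonneg h0]; exact h1

lemma rho_meas (hρ_cont : ContinuousOn ρ (Set.Ici 0)) :
    AEStronglyMeasurable ρ (volume.restrict (Set.Ioi (0:ℝ))) :=
  (hρ_cont.mono Set.Ioi_subset_Ici_self).aestronglyMeasurable measurableSet_Ioi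

lemma rho_shift_contOn (hρ_cont : ContinuousOn ρ (Set.Ici 0)) :
    ContinuousOn (fun ξ : ℝ => ρ (ξ - 1)) (Set.Ioi (1:ℝ)) := by
  refine hρ_cont.comp ((continuous_id.sub continuous_const).continuousOn) ?_
  intro ξ hξ
  simp only [Set.mem_Ici]
  have : (1:ℝ) < ξ := hξ
  linarith

lemma L_integrable (hρ_cont : ContinuousOn ρ (Set.Ici 0)) (habs : ∀ x : ℝ, |ρ x| ≤ 1)
    {η : ℝ} (hη : 0 < η) :
    IntegrableOn (fun ξ : ℝ => Real.exp (-η * ξ) * ρ ξ) (Set.Ioi 0) :=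
  integrable_exp_mul hη (rho_meas hρ_cont) (fun ξ _ => habs ξ)

lemma Lshift_integrable (hρ_cont : ContinuousOn ρ (Set.Ici 0)) (habs : ∀ x : ℝ, |ρ x| ≤ 1)
    {η : ℝ} (hη : 0 < η) :
    IntegrableOn (fun ξ : ℝ => Real.exp (-η * ξ) * ρ (ξ - 1)) (Set.Ioi 1) :=
  integrable_exp_mul hη
    ((rho_shift_contOn hρ_cont).aestronglyMeasurable measurableSet_Ioi)
    (fun ξ _ => habs (ξ - 1))

lemma Jint_integrable (hρ_cont : ContinuousOn ρ (Set.Ici 0)) (habs : ∀ x : ℝ, |ρ x| ≤ 1)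
    {η : ℝ} (hη : 0 < η) :
    IntegrableOn (fun ξ : ℝ => Real.exp (-η * ξ) * (ρ (ξ - 1) / ξ)) (Set.Ioi 1) := by
  refine integrable_exp_mul hη ?_ ?_
  · refine (((rho_shift_contOn hρ_cont).div continuousOn_id ?_)).aestronglyMeasurable measurableSet_Ioi
    intro ξ hξ
    have : (1:ℝ) < ξ := hξ
    exact ne_of_gt (lt_trans one_pos this)
  · intro ξ hξ
    have h1 : (1:ℝ) < ξ := hξ
    rw [abs_div, abs_of_pos (lt_trans one_pos h1)]
    have hpos : (0:ℝ) < ξ := lt_trans one_pos h1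
    calc |ρ (ξ - 1)| / ξ ≤ 1 / ξ := by
          gcongr
          exact habs (ξ - 1)
      _ ≤ 1 := by rw [div_le_one hpos]; exact h1.le

lemma rhoIoi1_integrable (hρ_cont : ContinuousOn ρ (Set.Ici 0)) (habs : ∀ x : ℝ, |ρ x| ≤ 1)
    {η : ℝ} (hη : 0 < η) :
    IntegrableOn (fun ξ : ℝ => Real.exp (-η * ξ) * ρ ξ) (Set.Ioi 1) :=
  integrable_exp_mul hη
    ((hρ_cont.mono (fun x (hx : x ∈ Set.Ioi 1) => le_of_lt (lt_trans one_pos hx))).aestronglyMeasurable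
      measurableSet_Ioi)
    (fun ξ _ => habs ξ)

lemma shift_id (hρ_cont : ContinuousOn ρ (Set.Ici 0)) {η : ℝ} (hη : 0 < η) :
    ∫ ξ in Set.Ioi (1:ℝ), Real.exp (-η * ξ) * ρ (ξ - 1)
      = Real.exp (-η) * ∫ ξ in Set.Ioi (0:ℝ), Real.exp (-η * ξ) * ρ ξ := by
  rw [shift_setIntegral (fun ξ => Real.exp (-η * ξ) * ρ (ξ - 1)), ← integral_const_mul]
  refine setIntegral_congr_fun measurableSet_Ioi (fun ξ _ => ?_)
  have h1 : ξ + 1 - 1 = ξ := by ring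
  have h2 : Real.exp (-η * (ξ + 1)) = Real.exp (-η) * Real.exp (-η * ξ) := by
    rw [← Real.exp_add]; congr 1; ring
  rw [h1, h2]; ring

lemma ibp (hρ_init : ∀ x : ℝ, 0 ≤ x → x ≤ 1 → ρ x = 1)
    (hρ_cont : ContinuousOn ρ (Set.Ici 0))
    (hρ_dde : ∀ x : ℝ, 1 < x → HasDerivAt ρ (-(ρ (x - 1)) / x) x)
    (habs : ∀ x : ℝ, |ρ x| ≤ 1) {η : ℝ} (hη : 0 < η) :
    ∫ ξ in Set.Ioi (1:ℝ),
        (η * (Real.exp (-η * ξ) * ρ ξ) + Real.exp (-η * ξ) * (ρ (ξ - 1) / ξ))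
      = Real.exp (-η) := by
  set f : ℝ → ℝ := fun ξ => -(Real.exp (-η * ξ) * ρ ξ) with hf
  have hderiv : ∀ ξ ∈ Set.Ioi (1:ℝ), HasDerivAt f
      (η * (Real.exp (-η * ξ) * ρ ξ) + Real.exp (-η * ξ) * (ρ (ξ - 1) / ξ)) ξ := by
    intro ξ hξ
    have h1 := ((exp_deriv_aux η ξ).fun_mul (hρ_dde ξ hξ)).fun_neg
    convert h1 using 1
    rfl
    rfl
    have hξ0 : ξ ≠ 0 := ne_of_gt (lt_trans one_pos hξ)
    field_simp
    ring
  have hcont : ContinuousWithinAt f (Set.Ici 1) 1 := by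
    have : ContinuousOn f (Set.Ici 1) := by
      refine (((Real.continuous_exp.comp (continuous_const.mul continuous_id)).continuousOn.mul
        (hρ_cont.mono (fun x (hx : x ∈ Set.Ici (1:ℝ)) => (le_trans zero_le_one hx : (0:ℝ) ≤ x))))).neg
    exact this 1 Set.self_mem_Ici
  have htend : Tendsto f atTop (nhds 0) := by
    have hneg : Tendsto (fun ξ : ℝ => -Real.exp (-η * ξ)) atTop (nhds 0) := by
      simpa using (tendsto_exp_scaled hη).neg
    refine tendsto_of_tendsto_of_tendsto_of_le_of_le' hneg (tendsto_exp_scaled hη)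
      (Eventually.of_forall fun ξ => ?_) (Eventually.of_forall fun ξ => ?_)
    · have := (abs_le.1 (habs ξ)).2
      have h2 : Real.exp (-η * ξ) * ρ ξ ≤ Real.exp (-η * ξ) * 1 :=
        mul_le_mul_of_nonneg_left this (Real.exp_pos _).le
      simp only [hf]; nlinarith
    · have := (abs_le.1 (habs ξ)).1
      have h2 : Real.exp (-η * ξ) * (-1) ≤ Real.exp (-η * ξ) * ρ ξ :=
        mul_le_mul_of_nonneg_left this (Real.exp_pos _).le
      simp only [hf]; nlinarith
  have hint : IntegrableOn (fun ξ : ℝ =>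
      η * (Real.exp (-η * ξ) * ρ ξ) + Real.exp (-η * ξ) * (ρ (ξ - 1) / ξ)) (Set.Ioi 1) :=
    ((rhoIoi1_integrable hρ_cont habs hη).const_mul η).add (Jint_integrable hρ_cont habs hη)
  have := integral_Ioi_of_hasDerivAt_of_tendsto hcont hderiv hint htend
  rw [this, hf]
  simp [hρ_init 1 zero_le_one le_rfl]

lemma base_part (hρ_init : ∀ x : ℝ, 0 ≤ x → x ≤ 1 → ρ x = 1) {η : ℝ} (hη : 0 < η) :
    ∫ ξ in Set.Ioc (0:ℝ) 1, η * (Real.exp (-η * ξ) * ρ ξ) = 1 - Real.exp (-η) := by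
  have hcongr : ∫ ξ in Set.Ioc (0:ℝ) 1, η * (Real.exp (-η * ξ) * ρ ξ)
      = ∫ ξ in Set.Ioc (0:ℝ) 1, η * Real.exp (-η * ξ) := by
    refine setIntegral_congr_fun measurableSet_Ioc (fun ξ hξ => ?_)
    rw [hρ_init ξ (le_of_lt hξ.1) hξ.2, mul_one]
  rw [hcongr, ← intervalIntegral.integral_of_le zero_le_one]
  have hF : ∀ x ∈ Set.uIcc (0:ℝ) 1, HasDerivAt (fun ξ : ℝ => -Real.exp (-η * ξ))
      (η * Real.exp (-η * x)) x := by
    intro x _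
    have := (exp_deriv_aux η x).fun_neg
    convert this using 1; rfl; rfl; ring
  have hintg : IntervalIntegrable (fun ξ : ℝ => η * Real.exp (-η * ξ)) volume 0 1 :=
    (Continuous.intervalIntegrable (by continuity) 0 1)
  rw [intervalIntegral.integral_eq_sub_of_hasDerivAt hF hintg]
  simp; ring

lemma G_eq (hρ_init : ∀ x : ℝ, 0 ≤ x → x ≤ 1 → ρ x = 1)
    (hρ_cont : ContinuousOn ρ (Set.Ici 0))
    (hρ_dde : ∀ x : ℝ, 1 < x → HasDerivAt ρ (-(ρ (x - 1)) / x) x)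
    (habs : ∀ x : ℝ, |ρ x| ≤ 1) {η : ℝ} (hη : 0 < η) :
    η * ∫ ξ in Set.Ioi (0:ℝ), Real.exp (-η * ξ) * ρ ξ
      = 1 - ∫ ξ in Set.Ioi (1:ℝ), Real.exp (-η * ξ) * (ρ (ξ - 1) / ξ) := by
  have hLint := L_integrable hρ_cont habs hη
  have hsplit : Set.Ioc (0:ℝ) 1 ∪ Set.Ioi 1 = Set.Ioi 0 := Set.Ioc_union_Ioi_eq_Ioi zero_le_one
  have hμ : η * ∫ ξ in Set.Ioi (0:ℝ), Real.exp (-η * ξ) * ρ ξ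
      = ∫ ξ in Set.Ioi (0:ℝ), η * (Real.exp (-η * ξ) * ρ ξ) := (integral_const_mul η _).symm
  have hsum : ∫ ξ in Set.Ioi (0:ℝ), η * (Real.exp (-η * ξ) * ρ ξ)
      = (∫ ξ in Set.Ioc (0:ℝ) 1, η * (Real.exp (-η * ξ) * ρ ξ))
        + ∫ ξ in Set.Ioi (1:ℝ), η * (Real.exp (-η * ξ) * ρ ξ) := by
    rw [← hsplit]
    have hI : IntegrableOn (fun ξ : ℝ => η * (Real.exp (-η * ξ) * ρ ξ)) (Set.Ioi 0) :=
      hLint.const_mul η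
    exact setIntegral_union (Set.Ioc_disjoint_Ioi le_rfl) measurableSet_Ioi
      (hI.mono_set Set.Ioc_subset_Ioi_self)
      (hI.mono_set (Set.Ioi_subset_Ioi zero_le_one))
  have hibp := ibp hρ_init hρ_cont hρ_dde habs hη
  have hIoi1 : ∫ ξ in Set.Ioi (1:ℝ), η * (Real.exp (-η * ξ) * ρ ξ)
      = Real.exp (-η) - ∫ ξ in Set.Ioi (1:ℝ), Real.exp (-η * ξ) * (ρ (ξ - 1) / ξ) := by
    have hadd := integral_add ((rhoIoi1_integrable hρ_cont habs hη).const_mul η)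
      (Jint_integrable hρ_cont habs hη)
    rw [← hibp]
    rw [hadd]
    ring
  rw [hμ, hsum, base_part hρ_init hη, hIoi1]
  ring

lemma Jmeas (hρ_cont : ContinuousOn ρ (Set.Ici 0)) (η : ℝ) :
    AEStronglyMeasurable (fun ξ : ℝ => Real.exp (-η * ξ) * (ρ (ξ - 1) / ξ))
      (volume.restrict (Set.Ioi 1)) := by
  refine ContinuousOn.aestronglyMeasurable ?_ measurableSet_Ioi
  refine (Real.continuous_exp.comp (continuous_const.mul continuous_id)).continuousOn.mul ?_
  refine (rho_shift_contOn hρ_cont).div continuousOn_id ?_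
  intro ξ hξ
  exact ne_of_gt (lt_trans one_pos hξ)

lemma J_hasDeriv (hρ_cont : ContinuousOn ρ (Set.Ici 0)) (habs : ∀ x : ℝ, |ρ x| ≤ 1)
    {η : ℝ} (hη : 0 < η) :
    HasDerivAt (fun s : ℝ => ∫ ξ in Set.Ioi (1:ℝ), Real.exp (-s * ξ) * (ρ (ξ - 1) / ξ))
      (-(Real.exp (-η) * ∫ ξ in Set.Ioi (0:ℝ), Real.exp (-η * ξ) * ρ ξ)) η := by
  have hε : (0:ℝ) < η / 2 := by linarith
  have key := hasDerivAt_integral_of_dominated_loc_of_deriv_le (μ := volume.restrict (Set.Ioi 1))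
    (F := fun s ξ => Real.exp (-s * ξ) * (ρ (ξ - 1) / ξ))
    (F' := fun s ξ => -(Real.exp (-s * ξ) * ρ (ξ - 1)))
    (x₀ := η) (bound := fun ξ => Real.exp (-(η / 2) * ξ)) (Metric.ball_mem_nhds η hε)
    (Eventually.of_forall fun s => Jmeas hρ_cont s)
    (Jint_integrable hρ_cont habs hη)
    ?_ ?_ ?_ ?_
  · obtain ⟨-, hd⟩ := key
    convert hd using 1
    rfl
    rfl
    rw [integral_neg, ← shift_id hρ_cont hη]
  · -- F' meas
    refine ContinuousOn.aestronglyMeasurable ?_ measurableSet_Ioi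
    exact (((Real.continuous_exp.comp (continuous_const.mul continuous_id)).continuousOn.mul
      (rho_shift_contOn hρ_cont))).neg
  · -- bound
    refine (ae_restrict_iff' measurableSet_Ioi).2 (ae_of_all _ fun ξ hξ => ?_)
    intro s hs
    have hξ0 : (0:ℝ) < ξ := lt_trans one_pos hξ
    have hs2 : η / 2 ≤ s := by
      have := abs_lt.1 (mem_ball_iff_norm.1 hs)
      linarith [this.1]
    rw [norm_neg, norm_mul, Real.norm_eq_abs, Real.norm_eq_abs, Real.abs_exp]
    calc Real.exp (-s * ξ) * |ρ (ξ - 1)| ≤ Real.exp (-s * ξ) * 1 :=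
          mul_le_mul_of_nonneg_left (habs _) (Real.exp_pos _).le
      _ = Real.exp (-s * ξ) := mul_one _
      _ ≤ Real.exp (-(η / 2) * ξ) := by
          apply Real.exp_le_exp.2
          nlinarith
  · exact exp_neg_integrableOn_Ioi 1 hε
  · -- diff
    refine (ae_restrict_iff' measurableSet_Ioi).2 (ae_of_all _ fun ξ hξ => ?_)
    intro s hs
    have hξ0 : ξ ≠ 0 := ne_of_gt (lt_trans one_pos hξ)
    have h1 : HasDerivAt (fun s : ℝ => Real.exp (-s * ξ)) (-ξ * Real.exp (-s * ξ)) s := by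
      have h0 : HasDerivAt (fun s : ℝ => -s * ξ) (-ξ) s := by
        simpa using ((hasDerivAt_id s).neg.mul_const ξ)
      simpa [mul_comm] using h0.exp
    have := h1.mul_const (ρ (ξ - 1) / ξ)
    convert this using 1
    rfl
    field_simp

lemma J_tendsto (hρ_cont : ContinuousOn ρ (Set.Ici 0)) (habs : ∀ x : ℝ, |ρ x| ≤ 1) :
    Tendsto (fun s : ℝ => ∫ ξ in Set.Ioi (1:ℝ), Real.exp (-s * ξ) * (ρ (ξ - 1) / ξ))
      atTop (nhds 0) := by
  have hbound : ∀ s : ℝ, 1 ≤ s →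
      |∫ ξ in Set.Ioi (1:ℝ), Real.exp (-s * ξ) * (ρ (ξ - 1) / ξ)| ≤ Real.exp (-s) := by
    intro s hs
    have hs0 : 0 < s := lt_of_lt_of_le one_pos hs
    have h1 : |∫ ξ in Set.Ioi (1:ℝ), Real.exp (-s * ξ) * (ρ (ξ - 1) / ξ)|
        ≤ ∫ ξ in Set.Ioi (1:ℝ), Real.exp (-s * ξ) := by
      rw [← Real.norm_eq_abs]
      refine le_trans (norm_integral_le_integral_norm _) ?_
      refine setIntegral_mono_on ((Jint_integrable hρ_cont habs hs0).norm)
        (exp_neg_integrableOn_Ioi 1 hs0) measurableSet_Ioi ?_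
      intro ξ hξ
      have h1ξ : (1:ℝ) < ξ := hξ
      have hξ0 : (0:ℝ) < ξ := lt_trans one_pos h1ξ
      rw [norm_mul, Real.norm_eq_abs, Real.norm_eq_abs, Real.abs_exp]
      calc Real.exp (-s * ξ) * |ρ (ξ - 1) / ξ| ≤ Real.exp (-s * ξ) * 1 := by
            refine mul_le_mul_of_nonneg_left ?_ (Real.exp_pos _).le
            rw [abs_div, abs_of_pos hξ0]
            calc |ρ (ξ - 1)| / ξ ≤ 1 / ξ := by gcongr; exact habs _
              _ ≤ 1 := by rw [div_le_one hξ0]; exact h1ξ.le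
        _ = Real.exp (-s * ξ) := mul_one _
    rw [integral_exp_scaled 1 hs0] at h1
    calc |∫ ξ in Set.Ioi (1:ℝ), Real.exp (-s * ξ) * (ρ (ξ - 1) / ξ)|
        ≤ Real.exp (-s * 1) / s := h1
      _ ≤ Real.exp (-s) := by
          rw [mul_one]
          exact div_le_self (Real.exp_pos _).le hs
  have hneg : Tendsto (fun s : ℝ => -Real.exp (-s)) atTop (nhds 0) := by
    simpa using tendsto_exp_neg_atTop_nhds_zero.neg
  refine tendsto_of_tendsto_of_tendsto_of_le_of_le' hneg tendsto_exp_neg_atTop_nhds_zero ?_ ?_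
  · filter_upwards [eventually_ge_atTop (1:ℝ)] with s hs
    exact (abs_le.1 (hbound s hs)).1
  · filter_upwards [eventually_ge_atTop (1:ℝ)] with s hs
    exact (abs_le.1 (hbound s hs)).2

end rho

/-- The one-sided Laplace transform of Dickman's function is
exp(−E(η))/η for η > 0. -/
theorem laplace_dickman
    (ρ : ℝ → ℝ)
    (hρ_neg : ∀ x < (0 : ℝ), ρ x = 0)
    (hρ_init : ∀ x : ℝ, 0 ≤ x → x ≤ 1 → ρ x = 1)
    (hρ_cont : ContinuousOn ρ (Set.Ici 0))
    (hρ_dde : ∀ x : ℝ, 1 < x → HasDerivAt ρ (-(ρ (x - 1)) / x) x)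
    (hρ_bdd : ∀ ξ : ℝ, 0 ≤ ξ → 0 ≤ ρ ξ ∧ ρ ξ ≤ 1)
    (η : ℝ) (hη : 0 < η) :
    ∫ ξ in Set.Ioi (0 : ℝ), Real.exp (-η * ξ) * ρ ξ = Real.exp (-expInt η) / η := by
  have habs : ∀ x : ℝ, |ρ x| ≤ 1 := rho_abs_le hρ_neg hρ_bdd
  set J : ℝ → ℝ := fun s => ∫ ξ in Set.Ioi (1:ℝ), Real.exp (-s * ξ) * (ρ (ξ - 1) / ξ)
    with hJdef
  set L : ℝ → ℝ := fun s => ∫ ξ in Set.Ioi (0:ℝ), Real.exp (-s * ξ) * ρ ξ with hLdef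
  set H : ℝ → ℝ := fun s => (1 - J s) * Real.exp (expInt s) with hHdef
  have hG : ∀ s : ℝ, 0 < s → s * L s = 1 - J s := by
    intro s hs
    exact G_eq hρ_init hρ_cont hρ_dde habs hs
  have hHd : ∀ s : ℝ, 0 < s → HasDerivAt H 0 s := by
    intro s hs
    have hJd : HasDerivAt J (-(Real.exp (-s) * L s)) s := J_hasDeriv hρ_cont habs hs
    have h1 : HasDerivAt (fun x => 1 - J x) (Real.exp (-s) * L s) s := by
      simpa using hJd.const_sub 1
    have hE : HasDerivAt (fun x => Real.exp (expInt x))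
        (Real.exp (expInt s) * (-(Real.exp (-s) / s))) s := (expInt_hasDerivAt hs).exp
    have hmul := h1.fun_mul hE
    rw [hHdef]
    convert hmul using 1
    rfl
    rfl
    rw [← hG s hs]
    field_simp
    ring
  have hconst : ∀ b : ℝ, η ≤ b → H b = H η := by
    intro b hb
    have hcont : ContinuousOn H (Set.Icc η b) := by
      intro x hx
      exact ((hHd x (lt_of_lt_of_le hη hx.1)).continuousAt).continuousWithinAt
    exact constant_of_has_deriv_right_zero hcont
      (fun x hx => (hHd x (lt_of_lt_of_le hη hx.1)).hasDerivWithinAt) b ⟨hb, le_rfl⟩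
  have hHtend : Tendsto H atTop (nhds 1) := by
    have h1 : Tendsto (fun s => 1 - J s) atTop (nhds 1) := by
      have := (tendsto_const_nhds (x := (1:ℝ)) (f := atTop)).sub (J_tendsto hρ_cont habs)
      rw [show (1:ℝ) - 0 = 1 by ring] at this
      exact this
    have h2 : Tendsto (fun s => Real.exp (expInt s)) atTop (nhds 1) := by
      have := Real.continuous_exp.continuousAt.tendsto.comp expInt_tendsto_zero
      simpa only [Function.comp_def, Real.exp_zero] using this
    have := h1.mul h2
    rw [one_mul] at this
    exact this
  have hHconst_tend : Tendsto H atTop (nhds (H η)) := by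
    refine Tendsto.congr' ?_ tendsto_const_nhds
    filter_upwards [eventually_ge_atTop η] with s hs
    exact (hconst s hs).symm
  have hHη : H η = 1 := tendsto_nhds_unique hHconst_tend hHtend
  have h1J : 1 - J η = Real.exp (-expInt η) := by
    rw [Real.exp_neg]
    exact eq_inv_of_mul_eq_one_left hHη
  have hGη := hG η hη
  rw [h1J] at hGη
  show L η = Real.exp (-expInt η) / η
  rw [eq_div_iff (ne_of_gt hη)]
  linarith [hGη]
end

section
/- For every real η > 0, ∫₁^∞ e^{−ηξ}·(2/√(π·ξ))·arctanh(√(1 − 1/ξ)) dξ = E(η)/√η, where E(η) = ∫_η^∞ e^{−t}/t dt is the exponential integral. (That is, the inverse Laplace transform of E(η)/√η equals (2/√(πξ))·arctanh(√(1 − 1/ξ)) for ξ ≥ 1 and 0 for 0 ≤ ξ < 1.) -/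
open Real MeasureTheory

/-- The inverse hyperbolic tangent: arctanh(w) = (1/2)·log((1+w)/(1−w)). -/
noncomputable def arctanh (w : ℝ) : ℝ := (1 / 2) * Real.log ((1 + w) / (1 - w))

section Aux
open Set

lemma transl {f : ℝ → ℝ} (s : ℝ) :
    ∫ u in Ioi (0:ℝ), f (u + s) = ∫ ξ in Ioi s, f ξ := by
  have h := (measurePreserving_add_right (volume : Measure ℝ) s).setIntegral_preimage_emb
    (measurableEmbedding_addRight s) f (Ioi s)
  have hpre : (fun x => x + s) ⁻¹' Ioi s = Ioi (0:ℝ) := by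
    ext x; simp [lt_add_iff_pos_left]
  rwa [hpre] at h

lemma transl_intOn {f : ℝ → ℝ} (s : ℝ) (hf : IntegrableOn (fun u => f (u + s)) (Ioi (0:ℝ))) :
    IntegrableOn f (Ioi s) := by
  have hmap : Measure.map (fun x => x + s) (volume : Measure ℝ) = volume :=
    (measurePreserving_add_right (volume : Measure ℝ) s).map_eq
  have hpre : (fun x => x + s) ⁻¹' Ioi s = Ioi (0:ℝ) := by
    ext x; simp [lt_add_iff_pos_left]
  rw [IntegrableOn, ← hmap,
    (measurableEmbedding_addRight s).restrict_map (volume : Measure ℝ) (Ioi s), hpre,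
    (measurableEmbedding_addRight s).integrable_map_iff]
  exact hf




lemma gauss_ptwise {η : ℝ} (hη : 0 < η) {u : ℝ} (hu : (0:ℝ) < u) :
    Real.exp (-(η*u)) * (η*u) ^ ((1:ℝ)/2 - 1) = (Real.sqrt η)⁻¹ * (Real.exp (-(η*u)) / Real.sqrt u) := by
  have h1 : ((1:ℝ)/2 - 1) = -(1/2) := by norm_num
  rw [h1, Real.rpow_neg (by positivity), ← Real.sqrt_eq_rpow, Real.sqrt_mul hη.le]
  have h2 : Real.sqrt η ≠ 0 := by positivity
  have h3 : Real.sqrt u ≠ 0 := by positivity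
  rw [mul_inv, div_eq_mul_inv]; ring

lemma gauss_intOn {η : ℝ} (hη : 0 < η) : IntegrableOn (fun u => Real.exp (-(η*u)) / Real.sqrt u) (Ioi (0:ℝ)) := by
  have h := (integrableOn_Ioi_comp_mul_left_iff (fun x => Real.exp (-x) * x ^ ((1:ℝ)/2 - 1)) 0 hη).mpr
    (by rw [mul_zero]; exact Real.GammaIntegral_convergent (by norm_num))
  have h2 : IntegrableOn (fun u => (Real.sqrt η)⁻¹ * (Real.exp (-(η*u)) / Real.sqrt u)) (Ioi (0:ℝ)) :=
    h.congr_fun (fun u hu => gauss_ptwise hη hu) measurableSet_Ioi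
  have h3 : IntegrableOn (fun u => Real.sqrt η * ((Real.sqrt η)⁻¹ * (Real.exp (-(η*u)) / Real.sqrt u))) (Ioi (0:ℝ)) :=
    h2.const_mul (Real.sqrt η)
  refine h3.congr_fun (fun u hu => ?_) measurableSet_Ioi
  have h2 : Real.sqrt η ≠ 0 := by positivity
  dsimp only
  rw [← mul_assoc, mul_inv_cancel₀ h2, one_mul]

lemma gauss_val {η : ℝ} (hη : 0 < η) :
    ∫ u in Ioi (0:ℝ), Real.exp (-(η*u)) / Real.sqrt u = Real.sqrt π / Real.sqrt η := by
  have key := integral_comp_mul_left_Ioi (fun x => Real.exp (-x) * x ^ ((1:ℝ)/2 - 1)) 0 hη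
  rw [mul_zero, ← Real.Gamma_eq_integral (by norm_num), Real.Gamma_one_half_eq] at key
  rw [setIntegral_congr_fun measurableSet_Ioi (fun u (hu : 0 < u) => gauss_ptwise hη hu)] at key
  rw [integral_const_mul] at key
  have h2 : Real.sqrt η ≠ 0 := by positivity
  have hηinv : (η : ℝ)⁻¹ • Real.sqrt π = (Real.sqrt η)⁻¹ * (Real.sqrt π / Real.sqrt η) := by
    rw [smul_eq_mul, ← Real.mul_self_sqrt hη.le]
    field_simp
    rw [Real.sqrt_sq (Real.sqrt_nonneg η)]
  rw [hηinv] at key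
  exact mul_left_cancel₀ (inv_ne_zero h2) key



lemma expInt_intOn {a : ℝ} (ha : 0 < a) : IntegrableOn (fun t => Real.exp (-t) / t) (Ioi a) := by
  have hexp : IntegrableOn (fun t : ℝ => Real.exp (-1 * t)) (Ioi a) := exp_neg_integrableOn_Ioi a one_pos
  have hexp' : IntegrableOn (fun t : ℝ => a⁻¹ * Real.exp (-1 * t)) (Ioi a) := hexp.const_mul _
  refine Integrable.mono hexp' ?_ ?_
  · refine (Measurable.aestronglyMeasurable ?_)
    exact (Real.measurable_exp.comp measurable_neg).div measurable_id
  · filter_upwards [ae_restrict_mem measurableSet_Ioi] with t ht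
    have hta : a < t := ht
    have ht0 : 0 < t := lt_trans ha hta
    rw [Real.norm_eq_abs, Real.norm_eq_abs, abs_of_nonneg (by positivity), abs_of_nonneg (by positivity),
      neg_one_mul, div_eq_mul_inv, mul_comm (a:ℝ)⁻¹]
    exact mul_le_mul_of_nonneg_left (by exact inv_anti₀ ha hta.le) (Real.exp_pos _).le

lemma expInt_ptwise {η s : ℝ} (hη : 0 < η) (hs0 : 0 < s) :
    η * (Real.exp (-(η*s)) / (η*s)) = Real.exp (-(η*s)) / s := by
  rw [eq_div_iff hs0.ne']
  field_simp

lemma expInt_scaled {η : ℝ} (hη : 0 < η) :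
    ∫ s in Ioi (1:ℝ), Real.exp (-(η*s)) / s = expInt η := by
  have key := integral_comp_mul_left_Ioi (fun x => Real.exp (-x) / x) 1 hη
  simp only [mul_one] at key
  have heq : ∀ s ∈ Ioi (1:ℝ), Real.exp (-(η*s)) / s = η • (Real.exp (-(η*s)) / (η*s)) := by
    intro s hs
    rw [smul_eq_mul, expInt_ptwise hη (lt_trans one_pos hs)]
  rw [setIntegral_congr_fun measurableSet_Ioi heq, integral_smul, key, smul_smul,
    mul_inv_cancel₀ hη.ne', one_smul, expInt]

lemma expInt_scaled_intOn {η : ℝ} (hη : 0 < η) :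
    IntegrableOn (fun s => Real.exp (-(η*s)) / s) (Ioi (1:ℝ)) := by
  have h := (integrableOn_Ioi_comp_mul_left_iff (fun x => Real.exp (-x) / x) 1 hη).mpr
    (by rw [mul_one]; exact expInt_intOn hη)
  have h2 : IntegrableOn (fun s => η * (Real.exp (-(η*s)) / (η*s))) (Ioi (1:ℝ)) := h.const_mul η
  exact h2.congr_fun (fun s hs => expInt_ptwise hη (lt_trans one_pos hs)) measurableSet_Ioi



-- interval integrability of the singular integrand
lemma singInt {ξ : ℝ} (hξ : 1 < ξ) :
    IntervalIntegrable (fun s => 1 / (s * Real.sqrt (ξ - s))) volume 1 ξ := by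
  have hrp : IntervalIntegrable (fun s : ℝ => (ξ - s) ^ (-(1:ℝ)/2)) volume 1 ξ := by
    have := (intervalIntegral.intervalIntegrable_rpow' (a := ξ - ξ) (b := ξ - 1)
      (r := -(1:ℝ)/2) (by norm_num)).comp_sub_left ξ
    simpa using this.symm
  rw [intervalIntegrable_iff_integrableOn_Ioc_of_le hξ.le] at hrp ⊢
  refine Integrable.mono hrp ?_ ?_
  · refine Measurable.aestronglyMeasurable ?_
    exact (measurable_const.div ((measurable_id.mul ((measurable_const.sub measurable_id).sqrt))))
  · filter_upwards [ae_restrict_mem measurableSet_Ioc] with s hs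
    obtain ⟨h1s, hsξ⟩ := hs
    have hs0 : (0:ℝ) < s := lt_trans one_pos h1s
    have hξs : (0:ℝ) ≤ ξ - s := by linarith
    rw [Real.norm_eq_abs, Real.norm_eq_abs, abs_of_nonneg (by positivity),
      abs_of_nonneg (Real.rpow_nonneg hξs _)]
    rw [show (-(1:ℝ)/2) = -(1/2) by ring, Real.rpow_neg hξs, ← Real.sqrt_eq_rpow]
    rcases eq_or_lt_of_le hξs with h | h
    · rw [← h]; simp
    · have hne : Real.sqrt (ξ-s) ≠ 0 := by positivity
      rw [div_le_iff₀ (by positivity), mul_comm s (Real.sqrt (ξ-s)), ← mul_assoc,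
        inv_mul_cancel₀ hne, one_mul]
      exact h1s.le


lemma lemA {ξ : ℝ} (hξ : 1 < ξ) :
    ∫ s in Ioo (1:ℝ) ξ, 1 / (s * Real.sqrt (ξ - s))
      = (2 / Real.sqrt ξ) * arctanh (Real.sqrt (1 - 1/ξ)) := by
  have hξ0 : (0:ℝ) < ξ := lt_trans one_pos hξ
  have hsξ0 : Real.sqrt ξ ≠ 0 := by positivity
  set w : ℝ → ℝ := fun s => Real.sqrt (1 - s/ξ) with hw
  set F : ℝ → ℝ := fun s => (Real.sqrt ξ)⁻¹ * (Real.log (1 - w s) - Real.log (1 + w s)) with hF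
  have hwnonneg : ∀ s, 0 ≤ w s := fun s => Real.sqrt_nonneg _
  have hwlt : ∀ s ∈ Icc (1:ℝ) ξ, w s < 1 := by
    intro s hs
    rw [hw]
    rw [Real.sqrt_lt' one_pos]
    have : 0 < s / ξ := div_pos (lt_of_lt_of_le one_pos hs.1) hξ0
    nlinarith
  -- continuity of F on Icc 1 ξ
  have hwcont : Continuous w := by
    exact Real.continuous_sqrt.comp (continuous_const.sub (continuous_id.div_const ξ))
  have hFcont : ContinuousOn F (Icc 1 ξ) := by
    refine ContinuousOn.mul continuousOn_const (ContinuousOn.sub ?_ ?_)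
    · refine ContinuousOn.log (continuous_const.sub hwcont).continuousOn (fun s hs => ?_)
      have := hwlt s hs; linarith
    · refine ContinuousOn.log (continuous_const.add hwcont).continuousOn (fun s hs => ?_)
      have := hwnonneg s; positivity
  -- derivative on Ioo
  have hderiv : ∀ s ∈ Ioo (1:ℝ) ξ, HasDerivAt F (1 / (s * Real.sqrt (ξ - s))) s := by
    intro s hs
    obtain ⟨h1s, hsξ⟩ := hs
    have hs0 : (0:ℝ) < s := lt_trans one_pos h1s
    have hd0 : (0:ℝ) < 1 - s/ξ := by
      have : s/ξ < 1 := (div_lt_one hξ0).mpr hsξ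
      linarith
    have hW0 : 0 < w s := Real.sqrt_pos.mpr hd0
    have hW1 : w s < 1 := hwlt s ⟨h1s.le, hsξ.le⟩
    have hW2 : (w s)^2 = 1 - s/ξ := Real.sq_sqrt hd0.le
    have hsqrtmul : Real.sqrt ξ * w s = Real.sqrt (ξ - s) := by
      rw [hw, ← Real.sqrt_mul hξ0.le]
      congr 1
      field_simp
    -- derivative of inner
    have hg : HasDerivAt (fun s : ℝ => 1 - s/ξ) (-ξ⁻¹) s := by
      simpa using ((hasDerivAt_id s).div_const ξ).const_sub 1
    have hwd : HasDerivAt w (1 / (2 * w s) * -ξ⁻¹) s := by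
      exact (Real.hasDerivAt_sqrt hd0.ne').comp s hg
    have hlog1 : HasDerivAt (fun s => Real.log (1 - w s)) (-(1 / (2 * w s) * -ξ⁻¹) / (1 - w s)) s :=
      (hwd.const_sub 1).log (by linarith)
    have hlog2 : HasDerivAt (fun s => Real.log (1 + w s)) ((1 / (2 * w s) * -ξ⁻¹) / (1 + w s)) s :=
      (hwd.const_add 1).log (by nlinarith [hwnonneg s])
    have hFd := ((hlog1.sub hlog2).const_mul ((Real.sqrt ξ)⁻¹))
    convert hFd using 1
    case e'_4 => rfl
    case e'_5 => rfl
    case e'_8 => rfl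
    -- algebra
    have h1 : (1 - w s) * (1 + w s) = s / ξ := by nlinarith [hW2]
    have hne1 : (1:ℝ) - w s ≠ 0 := by linarith
    have hne2 : (1:ℝ) + w s ≠ 0 := by nlinarith [hwnonneg s]
    have hsq : Real.sqrt (ξ - s) = Real.sqrt ξ * w s := hsqrtmul.symm
    rw [hsq]
    rw [div_sub_div _ _ hne1 hne2, h1]
    field_simp [hW0.ne', hs0.ne', hξ0.ne', hsξ0]
    ring
  have hFTC := intervalIntegral.integral_eq_sub_of_hasDerivAt_of_le hξ.le hFcont hderiv (singInt hξ)
  rw [intervalIntegral.integral_of_le hξ.le, integral_Ioc_eq_integral_Ioo] at hFTC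
  rw [hFTC]
  have hwξ : w ξ = 0 := by rw [hw]; simp [div_self hξ0.ne']
  have hw1 : w 1 = Real.sqrt (1 - 1/ξ) := by rw [hw]
  have hW1lt : w 1 < 1 := hwlt 1 ⟨le_refl _, hξ.le⟩
  have hW1nonneg : 0 ≤ w 1 := hwnonneg 1
  have hne1 : (1:ℝ) - w 1 ≠ 0 := by linarith
  have hne2 : (1:ℝ) + w 1 ≠ 0 := by linarith
  rw [hF]
  simp only [hwξ, Real.log_one]
  rw [← hw1, arctanh, Real.log_div hne2 hne1]
  field_simp
  ring

end Aux

open Set in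
/-- For η > 0,
∫₁^∞ e^{−ηξ}·(2/√(πξ))·arctanh(√(1 − 1/ξ)) dξ = E(η)/√η. -/
theorem laplace_arctanh (η : ℝ) (hη : 0 < η) :
    ∫ ξ in Set.Ioi (1 : ℝ),
        Real.exp (-η * ξ) * (2 / Real.sqrt (π * ξ)) * arctanh (Real.sqrt (1 - 1 / ξ)) =
      expInt η / Real.sqrt η := by
  set K : ℝ → ℝ → ℝ := fun s ξ => Real.exp (-(η*ξ)) / (s * Real.sqrt (ξ - s)) with hK
  set A : Set (ℝ×ℝ) := {p | 1 < p.1 ∧ p.1 < p.2} with hA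
  set f : ℝ → ℝ → ℝ := fun s ξ => A.indicator (fun p => K p.1 p.2) (s, ξ) with hf
  have hAmeas : MeasurableSet A :=
    (measurableSet_lt measurable_const measurable_fst).inter
      (measurableSet_lt measurable_fst measurable_snd)
  have hKmeas : Measurable (fun p : ℝ×ℝ => K p.1 p.2) := by
    apply Measurable.div
    · exact ((measurable_snd.const_mul η).neg).exp
    · exact measurable_fst.mul ((measurable_snd.sub measurable_fst).sqrt)
  have hKnonneg : ∀ s ξ : ℝ, 0 < s → 0 ≤ K s ξ := by
    intro s ξ hs
    have : 0 ≤ Real.sqrt (ξ - s) := Real.sqrt_nonneg _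
    positivity
  -- slices in ξ for fixed s
  have hslice : ∀ s : ℝ, (fun ξ => f s ξ) =
      if 1 < s then (Ioi s).indicator (fun ξ => K s ξ) else 0 := by
    intro s
    split_ifs with h1s
    · funext ξ
      by_cases hξ : s < ξ <;> simp [hf, hA, indicator, hξ, h1s]
    · funext ξ
      simp [hf, hA, indicator, h1s]
  -- slice integrability and value for s > 1
  have hsliceInt : ∀ s : ℝ, 1 < s → IntegrableOn (fun ξ => K s ξ) (Ioi s) := by
    intro s h1s
    have hs0 : (0:ℝ) < s := lt_trans one_pos h1s
    apply transl_intOn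
    have base : IntegrableOn
        (fun u => (Real.exp (-(η*s)) / s) * (Real.exp (-(η*u)) / Real.sqrt u)) (Ioi (0:ℝ)) :=
      (gauss_intOn hη).const_mul _
    refine base.congr_fun (fun u hu => ?_) measurableSet_Ioi
    simp only [hK]
    rw [add_comm u s, add_sub_cancel_left, mul_add, neg_add, Real.exp_add]
    field_simp
  have hsliceVal : ∀ s : ℝ, 1 < s →
      ∫ ξ in Ioi s, K s ξ = (Real.exp (-(η*s)) / s) * (Real.sqrt π / Real.sqrt η) := by
    intro s h1s
    have hs0 : (0:ℝ) < s := lt_trans one_pos h1s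
    rw [← transl (f := fun ξ => K s ξ) s]
    have : ∀ u, K s (u + s) = (Real.exp (-(η*s)) / s) * (Real.exp (-(η*u)) / Real.sqrt u) := by
      intro u
      simp only [hK]
      rw [add_comm u s, add_sub_cancel_left, mul_add, neg_add, Real.exp_add]
      field_simp
    simp_rw [this]
    rw [integral_const_mul, gauss_val hη]
  -- nonnegativity of f
  have hf_nonneg : ∀ s ξ : ℝ, 0 ≤ f s ξ := by
    intro s ξ
    exact indicator_nonneg (fun p hp => hKnonneg _ _ (lt_trans one_pos hp.1)) _
  -- inner integral in ξ
  have hInner : ∀ s : ℝ, ∫ ξ, f s ξ =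
      (Ioi (1:ℝ)).indicator (fun s => (Real.exp (-(η*s)) / s) * (Real.sqrt π / Real.sqrt η)) s := by
    intro s
    have h := hslice s
    by_cases h1s : 1 < s
    · rw [if_pos h1s] at h
      rw [h, integral_indicator measurableSet_Ioi, hsliceVal s h1s,
        indicator_of_mem (mem_Ioi.mpr h1s)]
    · rw [if_neg h1s] at h
      rw [h, indicator_of_notMem (by simpa using h1s)]
      simp
  have hInnerNorm : ∀ s : ℝ, (∫ ξ, ‖f s ξ‖) = ∫ ξ, f s ξ := by
    intro s
    congr 1
    funext ξ
    exact Real.norm_of_nonneg (hf_nonneg s ξ)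
  -- integrability of uncurry f
  have huncurry : Function.uncurry f = A.indicator (fun p => K p.1 p.2) := by
    funext p
    simp [Function.uncurry, hf]
  have hfInt : Integrable (Function.uncurry f) ((volume : Measure ℝ).prod volume) := by
    refine (integrable_prod_iff ?_).mpr ⟨?_, ?_⟩
    · rw [huncurry]
      exact (hKmeas.indicator hAmeas).aestronglyMeasurable
    · refine Filter.Eventually.of_forall (fun s => ?_)
      have h := hslice s
      by_cases h1s : 1 < s
      · rw [if_pos h1s] at h
        show Integrable (fun ξ => f s ξ) volume
        rw [h]
        exact (integrable_indicator_iff measurableSet_Ioi).mpr (hsliceInt s h1s)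
      · rw [if_neg h1s] at h
        show Integrable (fun ξ => f s ξ) volume
        rw [h]
        exact integrable_zero _ _ _
    · have : (fun s => ∫ ξ, ‖f s ξ‖) =
          (Ioi (1:ℝ)).indicator (fun s => (Real.exp (-(η*s)) / s) * (Real.sqrt π / Real.sqrt η)) := by
        funext s
        rw [hInnerNorm s, hInner s]
      simp only [Function.uncurry_apply_pair]
      rw [this, integrable_indicator_iff measurableSet_Ioi]
      exact (expInt_scaled_intOn hη).mul_const _
  have hswap := MeasureTheory.integral_integral_swap hfInt
  -- evaluate left side of swap
  have hleft : (∫ s, ∫ ξ, f s ξ) = expInt η * (Real.sqrt π / Real.sqrt η) := by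
    have : (fun s => ∫ ξ, f s ξ) =
        (Ioi (1:ℝ)).indicator (fun s => (Real.exp (-(η*s)) / s) * (Real.sqrt π / Real.sqrt η)) := by
      funext s; exact hInner s
    rw [this, integral_indicator measurableSet_Ioi, integral_mul_const, expInt_scaled hη]
  -- inner integral in s
  have hInner2 : ∀ ξ : ℝ, (∫ s, f s ξ) =
      (Ioi (1:ℝ)).indicator
        (fun ξ => Real.exp (-(η*ξ)) * ((2 / Real.sqrt ξ) * arctanh (Real.sqrt (1 - 1/ξ)))) ξ := by
    intro ξ
    have hsl : (fun s => f s ξ) = (Ioo (1:ℝ) ξ).indicator (fun s => K s ξ) := by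
      funext s
      by_cases hs : 1 < s ∧ s < ξ
      · simp [hf, hA, indicator, hs, hs.1, hs.2]
      · have : ¬ (s ∈ Ioo (1:ℝ) ξ) := by simpa [mem_Ioo] using hs
        simp only [hf, hA, indicator, mem_setOf_eq, mem_Ioo]
    rw [hsl, integral_indicator measurableSet_Ioo]
    by_cases h1ξ : 1 < ξ
    · rw [indicator_of_mem (mem_Ioi.mpr h1ξ)]
      have : ∀ s ∈ Ioo (1:ℝ) ξ, K s ξ = Real.exp (-(η*ξ)) * (1 / (s * Real.sqrt (ξ - s))) := by
        intro s hs
        simp only [hK]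
        rw [mul_one_div]
      rw [setIntegral_congr_fun measurableSet_Ioo this, integral_const_mul, lemA h1ξ]
    · rw [indicator_of_notMem (by simpa using h1ξ)]
      have hemp : Ioo (1:ℝ) ξ = ∅ := Ioo_eq_empty (by push_neg at h1ξ; exact fun h => absurd (h.trans_le h1ξ) (lt_irrefl 1))
      rw [hemp]
      simp
  have hright : (∫ ξ : ℝ, ∫ s : ℝ, f s ξ) =
      ∫ ξ in Ioi (1:ℝ), Real.exp (-(η*ξ)) * ((2 / Real.sqrt ξ) * arctanh (Real.sqrt (1 - 1/ξ))) := by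
    rw [show (fun ξ : ℝ => ∫ s : ℝ, f s ξ) =
        (Ioi (1:ℝ)).indicator
          (fun ξ => Real.exp (-(η*ξ)) * ((2 / Real.sqrt ξ) * arctanh (Real.sqrt (1 - 1/ξ))))
      from funext hInner2]
    exact integral_indicator measurableSet_Ioi
  have hπ : Real.sqrt π ≠ 0 := by positivity
  have hcongr : ∀ ξ ∈ Ioi (1:ℝ),
      Real.exp (-η * ξ) * (2 / Real.sqrt (π * ξ)) * arctanh (Real.sqrt (1 - 1 / ξ))
        = (Real.sqrt π)⁻¹ * (Real.exp (-(η*ξ)) * ((2 / Real.sqrt ξ) * arctanh (Real.sqrt (1 - 1/ξ)))) := by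
    intro ξ hξ
    have hξ0 : (0:ℝ) < ξ := lt_trans one_pos hξ
    have hsξ : Real.sqrt ξ ≠ 0 := by positivity
    rw [Real.sqrt_mul pi_pos.le, neg_mul]
    field_simp
  rw [setIntegral_congr_fun measurableSet_Ioi hcongr, integral_const_mul, ← hright, ← hswap, hleft]
  field_simp
end

section
/- Fix a real b > 0. For every real η > 0, ∫₀^∞ e^{−ηξ}·(1/(2ξ))·(2/√π)·∫_{√(b/(2ξ))}^∞ e^{−t²} dt dξ = E(√(2·b·η)), where E(x) = ∫ₓ^∞ e^{−t}/t dt is the exponential integral. (That is, E(√(2bη)) is the one-sided Laplace transform of ξ ↦ (1/(2ξ))·erfc(√(b/(2ξ))).) -/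
open Real MeasureTheory Set

-- substitution y = m/x identity
lemma glasser_aux (m : ℝ) (hm : 0 < m) :
    ∫ x in Set.Ioi (0:ℝ), (m / x ^ 2) * Real.exp (-(x ^ 2 + m ^ 2 / x ^ 2)) =
    ∫ x in Set.Ioi (0:ℝ), Real.exp (-(x ^ 2 + m ^ 2 / x ^ 2)) := by
  have himg : (fun x : ℝ => m / x) '' Ioi 0 = Ioi 0 := by
    ext y
    constructor
    · rintro ⟨x, hx, rfl⟩; exact div_pos hm hx
    · intro hy; exact ⟨m / y, div_pos hm hy, by field_simp⟩
  have hderiv : ∀ x ∈ Ioi (0:ℝ), HasDerivWithinAt (fun x : ℝ => m / x)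
      (-(m / x ^ 2)) (Ioi 0) x := by
    intro x hx
    have h := ((hasDerivAt_inv (ne_of_gt hx)).const_mul m).hasDerivWithinAt (s := Ioi 0)
    exact h.congr_deriv (by field_simp)
  have hinj : InjOn (fun x : ℝ => m / x) (Ioi 0) := by
    intro x hx y hy h
    field_simp [(show (0:ℝ) < x from hx).ne', (show (0:ℝ) < y from hy).ne'] at h
    exact h.symm
  have h := MeasureTheory.integral_image_eq_integral_abs_deriv_smul measurableSet_Ioi
      hderiv hinj (fun y => Real.exp (-(y ^ 2 + m ^ 2 / y ^ 2)))
  rw [himg] at h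
  rw [h]
  refine setIntegral_congr_fun measurableSet_Ioi (fun x hx => ?_)
  have hx0 : x ≠ 0 := ne_of_gt hx
  have : |(-(m / x ^ 2))| = m / x ^ 2 := by
    rw [abs_neg, abs_of_pos (div_pos hm (by positivity))]
  rw [this, smul_eq_mul]
  congr 2
  field_simp
  ring

lemma glasser_int1 (m : ℝ) :
    IntegrableOn (fun x : ℝ => Real.exp (-(x ^ 2 + m ^ 2 / x ^ 2))) (Ioi 0) := by
  refine Integrable.mono' ((integrable_exp_neg_mul_sq one_pos).restrict (s := Ioi 0)) ?_ ?_
  · apply Measurable.aestronglyMeasurable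
    measurability
  · filter_upwards with x
    rw [Real.norm_eq_abs, abs_of_pos (Real.exp_pos _)]
    apply Real.exp_le_exp.2
    have : 0 ≤ m ^ 2 / x ^ 2 := by positivity
    nlinarith

lemma glasser_int2 (m : ℝ) (hm : 0 < m) :
    IntegrableOn (fun x : ℝ => (m / x ^ 2) * Real.exp (-(x ^ 2 + m ^ 2 / x ^ 2))) (Ioi 0) := by
  refine Integrable.mono'
    (((integrable_exp_neg_mul_sq one_pos).restrict (s := Ioi 0)).const_mul m⁻¹) ?_ ?_
  · apply Measurable.aestronglyMeasurable
    measurability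
  · rw [ae_restrict_iff' measurableSet_Ioi]
    filter_upwards with x hx
    have hx0 : (0:ℝ) < x := hx
    rw [Real.norm_eq_abs, abs_of_nonneg (by positivity)]
    have key : (m / x ^ 2) * Real.exp (-(m ^ 2 / x ^ 2)) ≤ m⁻¹ := by
      have h1 : m ^ 2 / x ^ 2 ≤ Real.exp (m ^ 2 / x ^ 2) := by
        have := Real.add_one_le_exp (m ^ 2 / x ^ 2); linarith
      have h3 : m ^ 2 / x ^ 2 * Real.exp (-(m ^ 2 / x ^ 2)) ≤ 1 := by
        rw [Real.exp_neg, mul_inv_le_iff₀ (Real.exp_pos _)]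
        simpa using h1
      calc (m / x ^ 2) * Real.exp (-(m ^ 2 / x ^ 2))
          = m⁻¹ * (m ^ 2 / x ^ 2 * Real.exp (-(m ^ 2 / x ^ 2))) := by
            field_simp
        _ ≤ m⁻¹ * 1 := by
            apply mul_le_mul_of_nonneg_left h3 (by positivity)
        _ = m⁻¹ := mul_one _
    calc (m / x ^ 2) * Real.exp (-(x ^ 2 + m ^ 2 / x ^ 2))
        = ((m / x ^ 2) * Real.exp (-(m ^ 2 / x ^ 2))) * Real.exp (-x ^ 2) := by
          rw [mul_assoc, ← Real.exp_add]; ring_nf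
      _ ≤ m⁻¹ * Real.exp (-x ^ 2) := by
          apply mul_le_mul_of_nonneg_right key (le_of_lt (Real.exp_pos _))
      _ = m⁻¹ * Real.exp (-1 * x ^ 2) := by rw [neg_one_mul]

lemma glasser (m : ℝ) (hm : 0 < m) :
    ∫ x in Set.Ioi (0:ℝ), Real.exp (-(x ^ 2 + m ^ 2 / x ^ 2)) =
      Real.sqrt π / 2 * Real.exp (-(2 * m)) := by
  set G := ∫ x in Set.Ioi (0:ℝ), Real.exp (-(x ^ 2 + m ^ 2 / x ^ 2)) with hG
  have himg : (fun x : ℝ => x - m / x) '' Ioi 0 = univ := by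
    refine eq_univ_of_forall (fun y => ?_)
    have hs : 0 ≤ y ^ 2 + 4 * m := by positivity
    set s := Real.sqrt (y ^ 2 + 4 * m) with hsdef
    have hs2 : s ^ 2 = y ^ 2 + 4 * m := Real.sq_sqrt hs
    have hsy : |y| < s := by
      have : |y| = Real.sqrt (y ^ 2) := (Real.sqrt_sq_eq_abs y).symm
      rw [this]
      apply Real.sqrt_lt_sqrt (by positivity)
      linarith
    have hx : (0:ℝ) < (y + s) / 2 := by
      have := neg_abs_le y; have := abs_nonneg y; linarith [neg_lt_of_abs_lt hsy]
    refine ⟨(y + s) / 2, hx, ?_⟩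
    have hys : y + s ≠ 0 := by intro h0; rw [h0] at hx; simp at hx
    show (y + s) / 2 - m / ((y + s) / 2) = y
    field_simp
    nlinarith [hs2]
  have hderiv : ∀ x ∈ Ioi (0:ℝ), HasDerivWithinAt (fun x : ℝ => x - m / x)
      (1 + m / x ^ 2) (Ioi 0) x := by
    intro x hx
    have h := ((hasDerivAt_id x).sub ((hasDerivAt_inv (ne_of_gt hx)).const_mul m)).hasDerivWithinAt
      (s := Ioi 0)
    exact h.congr_deriv (by ring)
  have hinj : InjOn (fun x : ℝ => x - m / x) (Ioi 0) := by
    refine StrictMonoOn.injOn (fun x hx y hy hxy => ?_)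
    have h1 : m / y < m / x := div_lt_div_of_pos_left hm hx hxy
    show x - m / x < y - m / y
    linarith
  have h := MeasureTheory.integral_image_eq_integral_abs_deriv_smul measurableSet_Ioi
      hderiv hinj (fun u => Real.exp (-u ^ 2))
  rw [himg, Measure.restrict_univ] at h
  have hgauss : ∫ u : ℝ, Real.exp (-u ^ 2) = Real.sqrt π := by
    have := integral_gaussian 1
    simpa using this
  have hrhs : ∫ x in Ioi (0:ℝ), |1 + m / x ^ 2| • Real.exp (-(x - m / x) ^ 2) =
      Real.exp (2 * m) * (G + G) := by
    have hsum : G + G = ∫ x in Ioi (0:ℝ),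
        (Real.exp (-(x ^ 2 + m ^ 2 / x ^ 2)) + (m / x ^ 2) * Real.exp (-(x ^ 2 + m ^ 2 / x ^ 2))) := by
      rw [integral_add (glasser_int1 m) (glasser_int2 m hm), hG, glasser_aux m hm]
    rw [hsum, ← MeasureTheory.integral_const_mul]
    refine setIntegral_congr_fun measurableSet_Ioi (fun x hx => ?_)
    have hx0 : x ≠ 0 := ne_of_gt hx
    have habs : |1 + m / x ^ 2| = 1 + m / x ^ 2 := abs_of_pos (by positivity)
    rw [smul_eq_mul, habs]
    have hsq : -(x - m / x) ^ 2 = 2 * m + -(x ^ 2 + m ^ 2 / x ^ 2) := by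
      field_simp; ring
    rw [hsq, Real.exp_add]
    ring
  rw [h, hrhs] at hgauss
  have hexp : Real.exp (2 * m) ≠ 0 := Real.exp_ne_zero _
  have : G = Real.sqrt π / (2 * Real.exp (2 * m)) := by
    field_simp at hgauss ⊢
    linarith
  rw [this, Real.exp_neg]
  field_simp

lemma glasser_div (m : ℝ) (hm : 0 < m) :
    ∫ x in Set.Ioi (0:ℝ), Real.exp (-(x ^ 2 + m ^ 2 / x ^ 2)) / x ^ 2 =
      Real.sqrt π / 2 * Real.exp (-(2 * m)) / m := by
  have h1 : ∫ x in Set.Ioi (0:ℝ), (m / x ^ 2) * Real.exp (-(x ^ 2 + m ^ 2 / x ^ 2)) =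
      m * ∫ x in Set.Ioi (0:ℝ), Real.exp (-(x ^ 2 + m ^ 2 / x ^ 2)) / x ^ 2 := by
    rw [← MeasureTheory.integral_const_mul]
    refine setIntegral_congr_fun measurableSet_Ioi (fun x hx => ?_)
    have hx0 : x ≠ 0 := ne_of_gt hx
    field_simp
  rw [glasser_aux m hm, glasser m hm] at h1
  field_simp at h1 ⊢
  linarith

lemma rescale_expInt (c : ℝ) (hc : 0 < c) :
    ∫ m in Set.Ioi c, Real.exp (-(2 * m)) / m = expInt (2 * c) := by
  have h := MeasureTheory.integral_comp_mul_left_Ioi (fun s => Real.exp (-s) / s) c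
    (two_pos (α := ℝ))
  simp only [smul_eq_mul] at h
  have hB : ∫ t in Set.Ioi (2 * c), Real.exp (-t) / t =
      2 * ∫ x in Set.Ioi c, Real.exp (-(2 * x)) / (2 * x) := by
    rw [h]; ring
  rw [expInt, hB, ← MeasureTheory.integral_const_mul]
  refine (setIntegral_congr_fun measurableSet_Ioi (fun m hm => ?_)).symm
  have hm0 : m ≠ 0 := ne_of_gt (lt_trans hc hm)
  field_simp

lemma K_integrable_slice (c x : ℝ) (hx : 0 < x) :
    Integrable (fun m : ℝ => Real.exp (-(x ^ 2 + m ^ 2 / x ^ 2)) / x ^ 2)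
      (volume.restrict (Ioi c)) := by
  have hb : (0:ℝ) < (x ^ 2)⁻¹ := by positivity
  have base := ((integrable_exp_neg_mul_sq hb).restrict (s := Ioi c)).const_mul
    (Real.exp (-x ^ 2) / x ^ 2)
  refine base.congr (Filter.Eventually.of_forall fun m => ?_)
  have hx0 : x ≠ 0 := ne_of_gt hx
  show Real.exp (-x ^ 2) / x ^ 2 * Real.exp (-(x ^ 2)⁻¹ * m ^ 2) =
    Real.exp (-(x ^ 2 + m ^ 2 / x ^ 2)) / x ^ 2
  rw [div_mul_eq_mul_div, ← Real.exp_add]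
  congr 2
  field_simp
  ring

set_option maxHeartbeats 1000000 in
lemma K_prod_integrable (c : ℝ) (hc : 0 < c) :
    Integrable (fun p : ℝ × ℝ => Real.exp (-(p.1 ^ 2 + p.2 ^ 2 / p.1 ^ 2)) / p.1 ^ 2)
      ((volume.restrict (Ioi (0:ℝ))).prod (volume.restrict (Ioi c))) := by
  have hmeas : AEStronglyMeasurable
      (fun p : ℝ × ℝ => Real.exp (-(p.1 ^ 2 + p.2 ^ 2 / p.1 ^ 2)) / p.1 ^ 2)
      ((volume.restrict (Ioi (0:ℝ))).prod (volume.restrict (Ioi c))) := by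
    apply Measurable.aestronglyMeasurable
    measurability
  rw [MeasureTheory.integrable_prod_iff hmeas]
  constructor
  · rw [ae_restrict_iff' measurableSet_Ioi]
    filter_upwards with x hx
    exact K_integrable_slice c x hx
  · refine Integrable.mono'
      (((integrable_exp_neg_mul_sq one_pos).restrict (s := Ioi 0)).const_mul c⁻¹)
      hmeas.norm.integral_prod_right' ?_
    rw [ae_restrict_iff' measurableSet_Ioi]
    filter_upwards with x hx
    have hx0 : x ≠ 0 := ne_of_gt hx
    have hk : (0:ℝ) < c / x ^ 2 := by positivity
    -- the inner integral of the norm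
    have hnn : ∀ m : ℝ, (0:ℝ) ≤ Real.exp (-(x ^ 2 + m ^ 2 / x ^ 2)) / x ^ 2 :=
      fun m => by positivity
    have hint1 : IntegrableOn (fun m : ℝ => ‖Real.exp (-(x ^ 2 + m ^ 2 / x ^ 2)) / x ^ 2‖)
        (Ioi c) := (K_integrable_slice c x hx).norm
    have hint2 : IntegrableOn
        (fun m : ℝ => (Real.exp (-x ^ 2) / x ^ 2) * Real.exp (-(c / x ^ 2) * m)) (Ioi c) :=
      (exp_neg_integrableOn_Ioi c hk).const_mul _
    have hmono : ∫ m in Ioi c, ‖Real.exp (-(x ^ 2 + m ^ 2 / x ^ 2)) / x ^ 2‖ ≤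
        ∫ m in Ioi c, (Real.exp (-x ^ 2) / x ^ 2) * Real.exp (-(c / x ^ 2) * m) := by
      refine setIntegral_mono_on hint1 hint2 measurableSet_Ioi (fun m hm => ?_)
      have hm' : c < m := hm
      rw [Real.norm_eq_abs, abs_of_nonneg (hnn m)]
      have hrhs : Real.exp (-x ^ 2) / x ^ 2 * Real.exp (-(c / x ^ 2) * m) =
          Real.exp (-x ^ 2 + -(c / x ^ 2) * m) / x ^ 2 := by
        rw [Real.exp_add]; ring
      rw [hrhs]
      have h2 : c * m / x ^ 2 ≤ m ^ 2 / x ^ 2 := by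
        gcongr
        nlinarith
      have harg : -(x ^ 2 + m ^ 2 / x ^ 2) ≤ -x ^ 2 + -(c / x ^ 2) * m := by
        have he : -x ^ 2 + -(c / x ^ 2) * m = -(x ^ 2 + c * m / x ^ 2) := by ring
        rw [he]
        apply neg_le_neg
        linarith
      gcongr
    have hval : ∫ m in Ioi c, (Real.exp (-x ^ 2) / x ^ 2) * Real.exp (-(c / x ^ 2) * m) =
        (Real.exp (-x ^ 2) / x ^ 2) * ((c / x ^ 2)⁻¹ * Real.exp (-(c / x ^ 2) * c)) := by
      rw [MeasureTheory.integral_const_mul]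
      congr 1
      have h := MeasureTheory.integral_comp_mul_left_Ioi (fun s => Real.exp (-s)) c hk
      simp only [smul_eq_mul] at h
      have hrw : ∫ m in Ioi c, Real.exp (-(c / x ^ 2) * m) =
          ∫ m in Ioi c, Real.exp (-(c / x ^ 2 * m)) := by
        simp only [neg_mul]
      rw [hrw, h, integral_exp_neg_Ioi, neg_mul]
    rw [Real.norm_eq_abs, abs_of_nonneg (integral_nonneg fun m => norm_nonneg _)]
    refine hmono.trans ?_
    rw [hval]
    have hle : Real.exp (-(c / x ^ 2) * c) ≤ 1 := by
      apply Real.exp_le_one_iff.2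
      nlinarith
    calc Real.exp (-x ^ 2) / x ^ 2 * ((c / x ^ 2)⁻¹ * Real.exp (-(c / x ^ 2) * c))
        ≤ Real.exp (-x ^ 2) / x ^ 2 * ((c / x ^ 2)⁻¹ * 1) := by
          apply mul_le_mul_of_nonneg_left ?_ (by positivity)
          apply mul_le_mul_of_nonneg_left hle (by positivity)
      _ = c⁻¹ * Real.exp (-1 * x ^ 2) := by
          rw [neg_one_mul]; field_simp

/-- For b > 0 and η > 0, the one-sided Laplace transform of
ξ ↦ (1/(2ξ))·erfc(√(b/(2ξ))) equals E(√(2bη)). -/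
theorem laplace_erfc_scaled (b : ℝ) (hb : 0 < b) (η : ℝ) (hη : 0 < η) :
    ∫ ξ in Set.Ioi (0 : ℝ),
        Real.exp (-η * ξ) * ((1 / (2 * ξ)) *
          ((2 / Real.sqrt π) * ∫ t in Set.Ioi (Real.sqrt (b / (2 * ξ))), Real.exp (-t ^ 2))) =
      expInt (Real.sqrt (2 * b * η)) := by
  have hπ : (0:ℝ) < Real.sqrt π := Real.sqrt_pos.2 Real.pi_pos
  set c := Real.sqrt (b * η / 2) with hcdef
  have hc : 0 < c := Real.sqrt_pos.2 (by positivity)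
  -- Step 1: substitution ξ = x²/η
  have himg : (fun x : ℝ => x ^ 2 / η) '' Ioi 0 = Ioi 0 := by
    ext y; constructor
    · rintro ⟨x, hx, rfl⟩
      have hx' : (0:ℝ) < x := hx
      exact div_pos (by positivity) hη
    · intro hy
      have hy' : (0:ℝ) < y := hy
      refine ⟨Real.sqrt (η * y), Real.sqrt_pos.2 (by positivity), ?_⟩
      show Real.sqrt (η * y) ^ 2 / η = y
      rw [Real.sq_sqrt (by positivity : (0:ℝ) ≤ η * y)]
      field_simp
  have hderiv : ∀ x ∈ Ioi (0:ℝ), HasDerivWithinAt (fun x : ℝ => x ^ 2 / η)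
      (2 * x / η) (Ioi 0) x := by
    intro x hx
    have h := ((hasDerivAt_pow 2 x).div_const η).hasDerivWithinAt (s := Ioi 0)
    exact h.congr_deriv (by simp)
  have hinj : InjOn (fun x : ℝ => x ^ 2 / η) (Ioi 0) := by
    intro u hu v hv h
    have hu' : (0:ℝ) < u := hu
    have hv' : (0:ℝ) < v := hv
    have h2 := h
    field_simp at h2
    exact (pow_left_inj₀ hu'.le hv'.le two_ne_zero).1 h2
  have h1 := MeasureTheory.integral_image_eq_integral_abs_deriv_smul measurableSet_Ioi
    hderiv hinj (fun ξ => Real.exp (-η * ξ) * ((1 / (2 * ξ)) *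
      ((2 / Real.sqrt π) * ∫ t in Set.Ioi (Real.sqrt (b / (2 * ξ))), Real.exp (-t ^ 2))))
  rw [himg] at h1
  rw [h1]
  -- Step 2: simplify integrand
  have hstep2 : ∀ x ∈ Ioi (0:ℝ),
      |2 * x / η| • (Real.exp (-η * (x ^ 2 / η)) * ((1 / (2 * (x ^ 2 / η))) *
        ((2 / Real.sqrt π) *
          ∫ t in Set.Ioi (Real.sqrt (b / (2 * (x ^ 2 / η)))), Real.exp (-t ^ 2)))) =
      (2 / Real.sqrt π) * ∫ m in Set.Ioi c, Real.exp (-(x ^ 2 + m ^ 2 / x ^ 2)) / x ^ 2 := by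
    intro x hx
    have hx' : (0:ℝ) < x := hx
    have hx0 : x ≠ 0 := ne_of_gt hx'
    have hsq : Real.sqrt (b / (2 * (x ^ 2 / η))) = c / x := by
      rw [show b / (2 * (x ^ 2 / η)) = (b * η / 2) / x ^ 2 by field_simp]
      rw [Real.sqrt_div (by positivity : (0:ℝ) ≤ b * η / 2), Real.sqrt_sq hx'.le, hcdef]
    have hinner : (∫ t in Set.Ioi (c / x), Real.exp (-t ^ 2)) =
        x⁻¹ * ∫ m in Set.Ioi c, Real.exp (-(x⁻¹ * m) ^ 2) := by
      have h := MeasureTheory.integral_comp_mul_left_Ioi (fun t => Real.exp (-t ^ 2)) c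
        (inv_pos.2 hx')
      simp only [smul_eq_mul, inv_inv] at h
      rw [h, show x⁻¹ * c = c / x from (div_eq_inv_mul c x).symm]
      field_simp
    have hexp : Real.exp (-η * (x ^ 2 / η)) = Real.exp (-x ^ 2) := by
      congr 1; field_simp
    have habs : |2 * x / η| = 2 * x / η := abs_of_pos (by positivity)
    rw [hsq, hinner, smul_eq_mul, hexp, habs]
    have hI : (∫ m in Set.Ioi c, Real.exp (-(x ^ 2 + m ^ 2 / x ^ 2)) / x ^ 2) =
        (Real.exp (-x ^ 2) / x ^ 2) * ∫ m in Set.Ioi c, Real.exp (-(x⁻¹ * m) ^ 2) := by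
      rw [← MeasureTheory.integral_const_mul]
      refine setIntegral_congr_fun measurableSet_Ioi (fun m hm => ?_)
      rw [div_mul_eq_mul_div, ← Real.exp_add]
      congr 2
      field_simp
      ring
    rw [hI]
    have hπ0 : Real.sqrt π ≠ 0 := ne_of_gt hπ
    have hη0 : η ≠ 0 := ne_of_gt hη
    field_simp
  rw [setIntegral_congr_fun measurableSet_Ioi hstep2]
  rw [MeasureTheory.integral_const_mul]
  -- Step 3: Fubini
  have hswap : (∫ x in Set.Ioi (0:ℝ), ∫ m in Set.Ioi c,
      Real.exp (-(x ^ 2 + m ^ 2 / x ^ 2)) / x ^ 2) =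
      ∫ m in Set.Ioi c, ∫ x in Set.Ioi (0:ℝ),
        Real.exp (-(x ^ 2 + m ^ 2 / x ^ 2)) / x ^ 2 := by
    exact MeasureTheory.integral_integral_swap (K_prod_integrable c hc)
  rw [hswap]
  -- Step 4: Glasser
  have hglass : ∀ m ∈ Ioi c, (∫ x in Set.Ioi (0:ℝ),
      Real.exp (-(x ^ 2 + m ^ 2 / x ^ 2)) / x ^ 2) =
      Real.sqrt π / 2 * (Real.exp (-(2 * m)) / m) := by
    intro m hm
    rw [glasser_div m (lt_trans hc hm)]
    ring
  rw [setIntegral_congr_fun measurableSet_Ioi hglass]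
  rw [MeasureTheory.integral_const_mul, ← mul_assoc]
  rw [show (2 / Real.sqrt π) * (Real.sqrt π / 2) = 1 by field_simp]
  rw [one_mul, rescale_expInt c hc]
  congr 1
  rw [show 2 * b * η = (2 * c) ^ 2 by
    rw [hcdef, mul_pow, Real.sq_sqrt (by positivity : (0:ℝ) ≤ b * η / 2)]; ring]
  rw [Real.sqrt_sq (by positivity)]
end
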